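/- arXiv:1807.10799 — 6 statements merged into one kernel-verified Lean document; each statement's English description precedes it below -/
import Mathlib

section
/- Let 𝐚 = [a_{kj}]_{k,j=1}^3 be a real symmetric positive definite 3×3 matrix, κ₁ > 0 and ω ∈ ℝ. Then the function Γ(·,ω) satisfies the anisotropic Helmholtz equation pointwise away from the origin: for every x ∈ ℝ³ \ {0}, Σ_{k,j=1}^3 a_{kj} ∂²Γ(x,ω)/∂x_k∂x_j + ω² κ₁ Γ(x,ω) = 0. -/
open MeasureTheory Filter
open scoped Topology BigOperators

noncomputable section

/-- Three-dimensional Euclidean space. -/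
abbrev E3 := EuclideanSpace ℝ (Fin 3)

/-- The inner product `𝐚⁻¹ x · x`. -/
def qf (a : Matrix (Fin 3) (Fin 3) ℝ) (x : E3) : ℝ :=
  ∑ i, a⁻¹.mulVec (fun j => x j) i * x i

/-- The radiating fundamental solution
`Γ(x,ω) = −exp(i ω κ₁^{1/2} (𝐚⁻¹x·x)^{1/2}) / (4π (det 𝐚)^{1/2} (𝐚⁻¹x·x)^{1/2})`. -/
def Gamma (a : Matrix (Fin 3) (Fin 3) ℝ) (κ₁ ω : ℝ) (x : E3) : ℂ :=
  -Complex.exp (Complex.I * (ω : ℂ) * (Real.sqrt κ₁ : ℂ) * (Real.sqrt (qf a x) : ℂ)) /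
    ((4 * Real.pi * Real.sqrt a.det * Real.sqrt (qf a x) : ℝ) : ℂ)

/-- Directional (partial) derivative `∂f/∂x_k`. -/
def pd (f : E3 → ℂ) (k : Fin 3) (x : E3) : ℂ :=
  fderiv ℝ f x (EuclideanSpace.single k 1)

def Gr (c C t : ℝ) : ℂ :=
  -Complex.exp (Complex.I * c * Real.sqrt t) / (C * Real.sqrt t)

def Gr1 (c C t : ℝ) : ℂ :=
  Complex.exp (Complex.I * c * Real.sqrt t) * (1 - Complex.I * c * Real.sqrt t) /
    (2 * C * t * Real.sqrt t)

def Gr2 (c C t : ℝ) : ℂ :=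
  ((c : ℂ)^2 * t * Complex.exp (Complex.I * c * Real.sqrt t)
    - 3 * Complex.exp (Complex.I * c * Real.sqrt t) * (1 - Complex.I * c * Real.sqrt t)) /
    (4 * C * t^2 * Real.sqrt t)

lemma sqrt_hasDerivAt {t : ℝ} (ht : 0 < t) :
    HasDerivAt (fun s : ℝ => ((Real.sqrt s : ℝ) : ℂ)) ((1 / (2 * Real.sqrt t) : ℝ) : ℂ) t :=
  (Real.hasDerivAt_sqrt ht.ne').ofReal_comp

lemma exp_hasDerivAt (c : ℝ) {t : ℝ} (ht : 0 < t) :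
    HasDerivAt (fun s : ℝ => Complex.exp (Complex.I * c * Real.sqrt s))
      (Complex.exp (Complex.I * c * Real.sqrt t) * (Complex.I * c * ((1 / (2 * Real.sqrt t) : ℝ) : ℂ))) t := by
  have h1 := ((sqrt_hasDerivAt ht).const_mul (Complex.I * c)).cexp
  simpa [mul_comm, mul_assoc, mul_left_comm] using h1

lemma hasDerivAt_Gr (c C : ℝ) {t : ℝ} (ht : 0 < t) (hC : C ≠ 0) :
    HasDerivAt (fun s => Gr c C s) (Gr1 c C t) t := by
  have hs : Real.sqrt t ≠ 0 := (Real.sqrt_pos.mpr ht).ne'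
  have hden : ((C : ℂ) * Real.sqrt t) ≠ 0 := by
    simp [hC, hs]
  have hd : HasDerivAt (fun s : ℝ => (C : ℂ) * Real.sqrt s) ((C : ℂ) * ((1 / (2 * Real.sqrt t) : ℝ) : ℂ)) t :=
    (sqrt_hasDerivAt ht).const_mul _
  have hnum : HasDerivAt (fun s : ℝ => -Complex.exp (Complex.I * c * Real.sqrt s))
      (-(Complex.exp (Complex.I * c * Real.sqrt t) * (Complex.I * c * ((1 / (2 * Real.sqrt t) : ℝ) : ℂ)))) t :=
    (exp_hasDerivAt c ht).neg
  have h := hnum.fun_div hd hden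
  refine h.congr_deriv ?_
  unfold Gr1
  have htc : (t : ℂ) = (Real.sqrt t : ℂ) * (Real.sqrt t : ℂ) := by
    norm_cast
    exact (Real.mul_self_sqrt ht.le).symm
  rw [htc]
  have hsC : ((Real.sqrt t : ℝ) : ℂ) ≠ 0 := by exact_mod_cast hs
  have hCc : (C : ℂ) ≠ 0 := by exact_mod_cast hC
  push_cast
  field_simp
  ring

lemma hasDerivAt_Gr1 (c C : ℝ) {t : ℝ} (ht : 0 < t) (hC : C ≠ 0) :
    HasDerivAt (fun s => Gr1 c C s) (Gr2 c C t) t := by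
  have hs : Real.sqrt t ≠ 0 := (Real.sqrt_pos.mpr ht).ne'
  have hsC : ((Real.sqrt t : ℝ) : ℂ) ≠ 0 := by exact_mod_cast hs
  have hCc : (C : ℂ) ≠ 0 := by exact_mod_cast hC
  have htC : (t : ℂ) ≠ 0 := by exact_mod_cast ht.ne'
  -- numerator
  have hlin : HasDerivAt (fun s : ℝ => (1 : ℂ) - Complex.I * c * Real.sqrt s)
      (-(Complex.I * c * ((1 / (2 * Real.sqrt t) : ℝ) : ℂ))) t := by
    have := ((sqrt_hasDerivAt ht).const_mul (Complex.I * c)).const_sub 1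
    simpa [mul_comm, mul_assoc, mul_left_comm] using this
  have hnum := (exp_hasDerivAt c ht).fun_mul hlin
  -- denominator : 2*C*t*√t
  have hden : HasDerivAt (fun s : ℝ => 2 * (C : ℂ) * s * Real.sqrt s)
      (2 * (C : ℂ) * t * ((1 / (2 * Real.sqrt t) : ℝ) : ℂ) + 2 * C * Real.sqrt t) t := by
    have hid : HasDerivAt (fun s : ℝ => ((s : ℝ) : ℂ)) 1 t := (hasDerivAt_id t).ofReal_comp
    have h2 : HasDerivAt (fun s : ℝ => 2 * (C : ℂ) * s) (2 * C) t := by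
      simpa using hid.const_mul (2 * (C : ℂ))
    have := h2.mul (sqrt_hasDerivAt ht)
    refine this.congr_deriv ?_
    ring
  have hdenne : (2 * (C : ℂ) * t * Real.sqrt t) ≠ 0 := by
    simp [hCc, htC, hsC]
  have h := hnum.fun_div hden hdenne
  have hfun : (fun s : ℝ => Gr1 c C s) = fun s : ℝ =>
      Complex.exp (Complex.I * c * Real.sqrt s) * (1 - Complex.I * c * Real.sqrt s) /
        (2 * (C : ℂ) * s * Real.sqrt s) := by
    funext s; unfold Gr1; ring_nf
  rw [hfun]
  refine h.congr_deriv ?_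
  unfold Gr2
  have htc : (t : ℂ) = (Real.sqrt t : ℂ) * (Real.sqrt t : ℂ) := by
    norm_cast
    exact (Real.mul_self_sqrt ht.le).symm
  rw [htc]
  push_cast
  field_simp
  ring_nf
  rw [Complex.I_sq]
  field_simp
  ring

lemma key_ode (c C : ℝ) {t : ℝ} (ht : 0 < t) (hC : C ≠ 0) :
    4 * (t : ℂ) * Gr2 c C t + 6 * Gr1 c C t + (c : ℂ)^2 * Gr c C t = 0 := by
  have hs : Real.sqrt t ≠ 0 := (Real.sqrt_pos.mpr ht).ne'
  have hsC : ((Real.sqrt t : ℝ) : ℂ) ≠ 0 := by exact_mod_cast hs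
  have hCc : (C : ℂ) ≠ 0 := by exact_mod_cast hC
  unfold Gr Gr1 Gr2
  have htc : (t : ℂ) = (Real.sqrt t : ℂ) * (Real.sqrt t : ℂ) := by
    norm_cast
    exact (Real.mul_self_sqrt ht.le).symm
  rw [htc]
  field_simp
  ring_nf

def qD (a : Matrix (Fin 3) (Fin 3) ℝ) (x : E3) : E3 →L[ℝ] ℝ :=
  ∑ i, ((∑ j, a⁻¹ i j * x j) • (EuclideanSpace.proj i : E3 →L[ℝ] ℝ)
        + x i • (∑ j, a⁻¹ i j • (EuclideanSpace.proj j : E3 →L[ℝ] ℝ)))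

lemma hasFDerivAt_qf (a : Matrix (Fin 3) (Fin 3) ℝ) (x : E3) :
    HasFDerivAt (qf a) (qD a x) x := by
  have h : ∀ i : Fin 3, HasFDerivAt (fun y : E3 => (∑ j, a⁻¹ i j * y j) * y i)
      ((∑ j, a⁻¹ i j * x j) • (EuclideanSpace.proj i : E3 →L[ℝ] ℝ)
        + x i • (∑ j, a⁻¹ i j • (EuclideanSpace.proj j : E3 →L[ℝ] ℝ))) x := by
    intro i
    have h1 : HasFDerivAt (fun y : E3 => ∑ j, a⁻¹ i j * y j)
        (∑ j, a⁻¹ i j • (EuclideanSpace.proj j : E3 →L[ℝ] ℝ)) x := by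
      apply HasFDerivAt.fun_sum
      intro j _
      exact ((EuclideanSpace.proj j : E3 →L[ℝ] ℝ).hasFDerivAt (x := x)).const_mul (a⁻¹ i j)
    have h2 : HasFDerivAt (fun y : E3 => y i) (EuclideanSpace.proj i : E3 →L[ℝ] ℝ) x :=
      (EuclideanSpace.proj i : E3 →L[ℝ] ℝ).hasFDerivAt
    exact h1.mul h2
  have hsum := HasFDerivAt.sum (fun i (_ : i ∈ Finset.univ) => h i)
  have hfun : qf a = fun y : E3 => ∑ i, (∑ j, a⁻¹ i j * y j) * y i := by
    funext y
    unfold qf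
    simp [Matrix.mulVec, dotProduct, Fin.sum_univ_three]
  rw [hfun, qD]
  exact hsum

lemma qD_single (a : Matrix (Fin 3) (Fin 3) ℝ) (hsym : a.IsSymm) (x : E3) (k : Fin 3) :
    qD a x (EuclideanSpace.single k 1) = 2 * a⁻¹.mulVec (fun j => x j) k := by
  have hbsym : (a⁻¹).IsSymm := by
    unfold Matrix.IsSymm
    rw [Matrix.transpose_nonsing_inv, hsym.eq]
  have h01 : a⁻¹ 1 0 = a⁻¹ 0 1 := hbsym.apply 0 1
  have h02 : a⁻¹ 2 0 = a⁻¹ 0 2 := hbsym.apply 0 2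
  have h12 : a⁻¹ 2 1 = a⁻¹ 1 2 := hbsym.apply 1 2
  have hproj : ∀ (i : Fin 3), (EuclideanSpace.proj i : E3 →L[ℝ] ℝ) (EuclideanSpace.single k 1)
      = if i = k then 1 else 0 := by
    intro i
    rw [show (EuclideanSpace.proj i : E3 →L[ℝ] ℝ) (EuclideanSpace.single k 1)
        = (EuclideanSpace.single k (1:ℝ)) i from rfl, EuclideanSpace.single_apply]
  simp only [qD, ContinuousLinearMap.sum_apply, ContinuousLinearMap.add_apply,
    ContinuousLinearMap.smul_apply, smul_eq_mul, hproj]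
  fin_cases k <;>
    (simp [Matrix.mulVec, dotProduct, Fin.sum_univ_three]
     simp only [h01, h02, h12]
     ring)

lemma qf_pos (a : Matrix (Fin 3) (Fin 3) ℝ) (ha : a.PosDef) {x : E3} (hx : x ≠ 0) :
    0 < qf a x := by
  have hinv := ha.inv
  have hx' : (fun j => x j) ≠ (0 : Fin 3 → ℝ) := by
    intro h
    apply hx
    ext i
    exact congrFun h i
  have := hinv.dotProduct_mulVec_pos hx'
  have hq : qf a x = dotProduct (star (fun j => x j)) (a⁻¹.mulVec (fun j => x j)) := by
    unfold qf
    simp [dotProduct, star, mul_comm]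
  rw [hq]
  exact this

lemma trace_sum (a : Matrix (Fin 3) (Fin 3) ℝ) (ha : a.PosDef) :
    ∑ k : Fin 3, ∑ j : Fin 3, a k j * a⁻¹ j k = 3 := by
  have h : a * a⁻¹ = 1 := Matrix.mul_nonsing_inv a (isUnit_iff_ne_zero.mpr ha.det_pos.ne')
  have h2 : ∀ k : Fin 3, ∑ j, a k j * a⁻¹ j k = (1 : Matrix (Fin 3) (Fin 3) ℝ) k k := by
    intro k
    rw [← h, Matrix.mul_apply]
  simp only [h2]
  simp [Fin.sum_univ_three, Matrix.one_apply]

lemma quad_sum (a : Matrix (Fin 3) (Fin 3) ℝ) (ha : a.PosDef) (x : E3) :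
    ∑ k : Fin 3, ∑ j : Fin 3,
      a k j * a⁻¹.mulVec (fun i => x i) j * a⁻¹.mulVec (fun i => x i) k = qf a x := by
  have h : a.mulVec (a⁻¹.mulVec (fun i => x i)) = (fun i => x i) := by
    rw [Matrix.mulVec_mulVec, Matrix.mul_nonsing_inv a (isUnit_iff_ne_zero.mpr ha.det_pos.ne'),
      Matrix.one_mulVec]
  have h2 : ∀ k : Fin 3, ∑ j : Fin 3, a k j * a⁻¹.mulVec (fun i => x i) j
      * a⁻¹.mulVec (fun i => x i) k = x k * a⁻¹.mulVec (fun i => x i) k := by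
    intro k
    rw [← Finset.sum_mul]
    congr 1
    have : ∑ j : Fin 3, a k j * a⁻¹.mulVec (fun i => x i) j
        = (a.mulVec (a⁻¹.mulVec (fun i => x i))) k := by
      simp [Matrix.mulVec, dotProduct]
    rw [this, h]
  simp only [h2]
  unfold qf
  apply Finset.sum_congr rfl
  intro k _
  ring

def rowCLM (a : Matrix (Fin 3) (Fin 3) ℝ) (j : Fin 3) : E3 →L[ℝ] ℝ :=
  ∑ i, (2 * a⁻¹ j i) • (EuclideanSpace.proj i : E3 →L[ℝ] ℝ)

lemma rowCLM_apply (a : Matrix (Fin 3) (Fin 3) ℝ) (j : Fin 3) (y : E3) :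
    rowCLM a j y = 2 * a⁻¹.mulVec (fun i => y i) j := by
  simp [rowCLM, Matrix.mulVec, dotProduct, Fin.sum_univ_three]
  ring

lemma rowCLM_single (a : Matrix (Fin 3) (Fin 3) ℝ) (j k : Fin 3) :
    rowCLM a j (EuclideanSpace.single k 1) = 2 * a⁻¹ j k := by
  rw [rowCLM_apply]
  have : ∀ i : Fin 3, (EuclideanSpace.single k (1:ℝ)) i = if i = k then 1 else 0 := by
    intro i; rw [EuclideanSpace.single_apply]
  simp only [Matrix.mulVec, dotProduct, this, Fin.sum_univ_three]
  fin_cases k <;> simp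

lemma Gamma_eq (a : Matrix (Fin 3) (Fin 3) ℝ) (κ₁ ω : ℝ) :
    Gamma a κ₁ ω = fun x => Gr (ω * Real.sqrt κ₁) (4 * Real.pi * Real.sqrt a.det) (qf a x) := by
  funext x
  unfold Gamma Gr
  push_cast
  ring_nf

lemma CC_ne (a : Matrix (Fin 3) (Fin 3) ℝ) (ha : a.PosDef) :
    (4 * Real.pi * Real.sqrt a.det) ≠ 0 := by
  have h1 : (0:ℝ) < Real.sqrt a.det := Real.sqrt_pos.mpr ha.det_pos
  positivity

lemma pd_Gamma (a : Matrix (Fin 3) (Fin 3) ℝ) (ha : a.PosDef) (hsym : a.IsSymm)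
    (κ₁ ω : ℝ) {y : E3} (hy : y ≠ 0) (j : Fin 3) :
    pd (Gamma a κ₁ ω) j y
      = Gr1 (ω * Real.sqrt κ₁) (4 * Real.pi * Real.sqrt a.det) (qf a y) * (rowCLM a j y : ℂ) := by
  set c := ω * Real.sqrt κ₁
  set CC := 4 * Real.pi * Real.sqrt a.det
  have hq := qf_pos a ha hy
  have hG : HasFDerivAt (Gamma a κ₁ ω)
      (((1 : ℝ →L[ℝ] ℝ).smulRight (Gr1 c CC (qf a y))).comp (qD a y)) y := by
    rw [Gamma_eq]
    exact ((hasDerivAt_Gr c CC hq (CC_ne a ha)).hasFDerivAt).comp y (hasFDerivAt_qf a y)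
  unfold pd
  rw [hG.fderiv]
  simp only [ContinuousLinearMap.coe_comp', Function.comp_apply,
    ContinuousLinearMap.smulRight_apply, ContinuousLinearMap.one_apply]
  rw [qD_single a hsym y j, rowCLM_apply]
  rw [Complex.real_smul]
  ring

lemma pd2_Gamma (a : Matrix (Fin 3) (Fin 3) ℝ) (ha : a.PosDef) (hsym : a.IsSymm)
    (κ₁ ω : ℝ) {x : E3} (hx : x ≠ 0) (j k : Fin 3) :
    pd (pd (Gamma a κ₁ ω) j) k x
      = Gr1 (ω * Real.sqrt κ₁) (4 * Real.pi * Real.sqrt a.det) (qf a x)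
          * ((2 * a⁻¹ j k : ℝ) : ℂ)
        + ((rowCLM a j x : ℝ) : ℂ) *
          (((rowCLM a k x : ℝ) : ℂ) * Gr2 (ω * Real.sqrt κ₁)
            (4 * Real.pi * Real.sqrt a.det) (qf a x)) := by
  set c := ω * Real.sqrt κ₁
  set CC := 4 * Real.pi * Real.sqrt a.det
  have hq := qf_pos a ha hx
  have hev : pd (Gamma a κ₁ ω) j =ᶠ[𝓝 x]
      (fun y => Gr1 c CC (qf a y) * ((rowCLM a j y : ℝ) : ℂ)) := by
    filter_upwards [eventually_ne_nhds hx] with y hy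
    exact pd_Gamma a ha hsym κ₁ ω hy j
  rw [show pd (pd (Gamma a κ₁ ω) j) k x
      = fderiv ℝ (pd (Gamma a κ₁ ω) j) x (EuclideanSpace.single k 1) from rfl]
  rw [hev.fderiv_eq]
  have h1 : HasFDerivAt (fun y => Gr1 c CC (qf a y))
      (((1 : ℝ →L[ℝ] ℝ).smulRight (Gr2 c CC (qf a x))).comp (qD a x)) x :=
    ((hasDerivAt_Gr1 c CC hq (CC_ne a ha)).hasFDerivAt).comp x (hasFDerivAt_qf a x)
  have h2 : HasFDerivAt (fun y : E3 => ((rowCLM a j y : ℝ) : ℂ))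
      (Complex.ofRealCLM.comp (rowCLM a j)) x :=
    (Complex.ofRealCLM.comp (rowCLM a j)).hasFDerivAt
  have hF := h1.fun_mul h2
  rw [hF.fderiv]
  simp only [ContinuousLinearMap.add_apply, ContinuousLinearMap.smul_apply,
    ContinuousLinearMap.coe_comp', Function.comp_apply,
    ContinuousLinearMap.smulRight_apply, ContinuousLinearMap.one_apply,
    Complex.ofRealCLM_apply]
  rw [rowCLM_single, qD_single a hsym x k, ← rowCLM_apply]
  simp only [smul_eq_mul, Complex.real_smul]

/-- `Γ(·,ω)` satisfies the anisotropic Helmholtz equation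
`Σ a_{kj} ∂²Γ/∂x_k∂x_j + ω²κ₁ Γ = 0` pointwise on `ℝ³ \ {0}`. -/
theorem stmt0 (a : Matrix (Fin 3) (Fin 3) ℝ) (ha : a.PosDef) (hsym : a.IsSymm)
    (κ₁ ω : ℝ) (hκ : 0 < κ₁) (x : E3) (hx : x ≠ 0) :
    ∑ k : Fin 3, ∑ j : Fin 3, (a k j : ℂ) * pd (pd (Gamma a κ₁ ω) j) k x
      + (ω : ℂ) ^ 2 * (κ₁ : ℂ) * Gamma a κ₁ ω x = 0 := by
  set c := ω * Real.sqrt κ₁ with hc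
  set CC := 4 * Real.pi * Real.sqrt a.det with hCC
  have hq := qf_pos a ha hx
  set q := qf a x with hqdef
  have hterm : ∀ k j : Fin 3, (a k j : ℂ) * pd (pd (Gamma a κ₁ ω) j) k x
      = 2 * Gr1 c CC q * ((a k j * a⁻¹ j k : ℝ) : ℂ)
        + 4 * Gr2 c CC q *
          ((a k j * a⁻¹.mulVec (fun i => x i) j * a⁻¹.mulVec (fun i => x i) k : ℝ) : ℂ) := by
    intro k j
    rw [pd2_Gamma a ha hsym κ₁ ω hx j k, rowCLM_apply, rowCLM_apply]
    push_cast
    ring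
  have hsum : ∑ k : Fin 3, ∑ j : Fin 3, (a k j : ℂ) * pd (pd (Gamma a κ₁ ω) j) k x
      = 2 * Gr1 c CC q * ((∑ k : Fin 3, ∑ j : Fin 3, a k j * a⁻¹ j k : ℝ) : ℂ)
        + 4 * Gr2 c CC q * ((∑ k : Fin 3, ∑ j : Fin 3,
            a k j * a⁻¹.mulVec (fun i => x i) j * a⁻¹.mulVec (fun i => x i) k : ℝ) : ℂ) := by
    push_cast
    rw [Finset.mul_sum, Finset.mul_sum, ← Finset.sum_add_distrib]
    refine Finset.sum_congr rfl fun k _ => ?_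
    rw [Finset.mul_sum, Finset.mul_sum, ← Finset.sum_add_distrib]
    refine Finset.sum_congr rfl fun j _ => ?_
    rw [hterm k j]
    push_cast
    ring
  rw [hsum, trace_sum a ha, quad_sum a ha x, ← hqdef]
  have hGx : Gamma a κ₁ ω x = Gr c CC q := by rw [Gamma_eq]
  rw [hGx]
  have homega : (ω : ℂ) ^ 2 * (κ₁ : ℂ) = (c : ℂ) ^ 2 := by
    rw [hc]
    push_cast
    rw [mul_pow]
    norm_cast
    rw [Real.sq_sqrt hκ.le]
  rw [homega]
  have hkey := key_ode c CC hq (CC_ne a ha)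
  push_cast
  linear_combination hkey
end
end

section
/- Let 𝐚 = [a_{kj}]_{k,j=1}^3 be a real symmetric positive definite 3×3 matrix, κ₁ > 0 and ω > 0. For every compact set K ⊂ ℝ³ there exist constants C > 0 and R > 0 such that for all x ∈ K and all y ∈ ℝ³ with |y| ≥ R, writing η = y/|y|, one has the far-field asymptotics | Γ(y−x,ω) − c(ξ(η)) exp(i ξ(η)·(y−x)) / |y| | ≤ C/|y|². -/
open MeasureTheory Filter
open scoped Topology BigOperators

noncomputable section

/-- `ξ(η) = ω κ₁^{1/2} (𝐚⁻¹η·η)^{−1/2} 𝐚⁻¹η` for a (unit) vector `η`. -/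
def xiVec (a : Matrix (Fin 3) (Fin 3) ℝ) (κ₁ ω : ℝ) (η : Fin 3 → ℝ) : Fin 3 → ℝ :=
  (ω * Real.sqrt κ₁ * (Real.sqrt (∑ i, a⁻¹.mulVec η i * η i))⁻¹) • a⁻¹.mulVec η

/-- The far-field coefficient `c(ξ) = −|𝐚ξ| / (4π ω κ₁^{1/2} (det 𝐚)^{1/2})`. -/
def ffc (a : Matrix (Fin 3) (Fin 3) ℝ) (κ₁ ω : ℝ) (ξ : Fin 3 → ℝ) : ℝ :=
  -Real.sqrt (∑ k, (a.mulVec ξ k) ^ 2) /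
    (4 * Real.pi * ω * Real.sqrt κ₁ * Real.sqrt a.det)

namespace Stmt4Aux

open Matrix

lemma qf_eq_dot (a : Matrix (Fin 3) (Fin 3) ℝ) (v : E3) :
    qf a v = (a⁻¹ *ᵥ fun j => v j) ⬝ᵥ (fun j => v j) := rfl

lemma dot_symm (A : Matrix (Fin 3) (Fin 3) ℝ) (hA : A.IsSymm) (v w : Fin 3 → ℝ) :
    A.mulVec v ⬝ᵥ w = A.mulVec w ⬝ᵥ v := by
  rw [dotProduct_comm, Matrix.dotProduct_mulVec, ← Matrix.mulVec_transpose, hA]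

lemma qd_bound (A : Matrix (Fin 3) (Fin 3) ℝ) (v w : Fin 3 → ℝ) (V W : ℝ)
    (hv : ∀ j, |v j| ≤ V) (hw : ∀ j, |w j| ≤ W) :
    |A.mulVec v ⬝ᵥ w| ≤ (∑ i, ∑ j, |A i j|) * V * W := by
  have hV : 0 ≤ V := le_trans (abs_nonneg _) (hv 0)
  have hW : 0 ≤ W := le_trans (abs_nonneg _) (hw 0)
  simp only [Matrix.mulVec, dotProduct]
  calc |∑ i, (∑ j, A i j * v j) * w i| ≤ ∑ i, |(∑ j, A i j * v j) * w i| :=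
        Finset.abs_sum_le_sum_abs _ _
    _ ≤ ∑ i, (∑ j, |A i j| * V) * W := by
        refine Finset.sum_le_sum fun i _ => ?_
        rw [abs_mul]
        refine mul_le_mul ?_ (hw i) (abs_nonneg _) (by positivity)
        calc |∑ j, A i j * v j| ≤ ∑ j, |A i j * v j| := Finset.abs_sum_le_sum_abs _ _
          _ ≤ ∑ j, |A i j| * V := Finset.sum_le_sum fun j _ => by
              rw [abs_mul]; exact mul_le_mul_of_nonneg_left (hv j) (abs_nonneg _)
    _ = (∑ i, ∑ j, |A i j|) * V * W := by
        simp [Finset.sum_mul]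

lemma coord_le (y : E3) (i : Fin 3) : |y i| ≤ ‖y‖ := by
  rw [EuclideanSpace.norm_eq, ← Real.sqrt_sq_eq_abs]
  refine Real.sqrt_le_sqrt ?_
  have h := Finset.single_le_sum (f := fun j => ‖y j‖ ^ 2)
    (fun j _ => by positivity) (Finset.mem_univ i)
  simpa [Real.norm_eq_abs, sq_abs] using h

lemma sum_sq_eq (y : E3) : ∑ i, y i ^ 2 = ‖y‖ ^ 2 := by
  rw [EuclideanSpace.norm_eq, Real.sq_sqrt (by positivity)]
  simp [Real.norm_eq_abs, sq_abs]

lemma qf_smul (a : Matrix (Fin 3) (Fin 3) ℝ) (c : ℝ) (v : E3) :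
    qf a (c • v) = c ^ 2 * qf a v := by
  have h : (a⁻¹ *ᵥ fun j => (c • v) j) = fun i => c * (a⁻¹ *ᵥ fun j => v j) i := by
    ext i
    simp [Matrix.mulVec, dotProduct, Finset.mul_sum, mul_assoc, mul_left_comm]
  simp only [qf, h]
  rw [Finset.mul_sum]
  refine Finset.sum_congr rfl fun i _ => ?_
  have : (c • v) i = c * v i := rfl
  rw [this]; ring

lemma qf_pos (a : Matrix (Fin 3) (Fin 3) ℝ) (ha : a.PosDef) {v : E3} (hv : v ≠ 0) :
    0 < qf a v := by
  have h := ha.inv.dotProduct_mulVec_pos (x := fun j => v j) (fun h0 => hv (by ext i; exact congrFun h0 i))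
  rw [qf_eq_dot, dotProduct_comm]
  simpa using h

lemma expand (a : Matrix (Fin 3) (Fin 3) ℝ) (hA : (a⁻¹).IsSymm) (y x : E3) :
    qf a (y - x) = qf a y - 2 * ((a⁻¹ *ᵥ fun j => y j) ⬝ᵥ fun j => x j) + qf a x := by
  have h : (fun j => (y - x) j) = (fun j => y j) - (fun j => x j) := rfl
  rw [qf_eq_dot, h, Matrix.mulVec_sub, sub_dotProduct, dotProduct_sub,
    dotProduct_sub, dot_symm a⁻¹ hA (fun j => x j) (fun j => y j)]
  rw [qf_eq_dot, qf_eq_dot]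
  ring

lemma exp_close (s t : ℝ) (h : |s - t| ≤ 1) :
    ‖Complex.exp (Complex.I * s) - Complex.exp (Complex.I * t)‖ ≤ 2 * |s - t| := by
  have heq : Complex.exp (Complex.I * s) - Complex.exp (Complex.I * t)
      = Complex.exp (Complex.I * t) * (Complex.exp (Complex.I * (s - t : ℝ)) - 1) := by
    rw [mul_sub, mul_one, ← Complex.exp_add]
    push_cast; ring_nf
  rw [heq, norm_mul]
  have h1 : ‖Complex.exp (Complex.I * t)‖ = 1 := by
    rw [Complex.norm_exp]; simp
  rw [h1, one_mul]
  have h2 : ‖Complex.I * (s - t : ℝ)‖ = |s - t| := by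
    rw [norm_mul, Complex.norm_I, one_mul, Complex.norm_real, Real.norm_eq_abs]
  calc ‖Complex.exp (Complex.I * (s - t : ℝ)) - 1‖
      ≤ 2 * ‖Complex.I * (s - t : ℝ)‖ :=
        Complex.norm_exp_sub_one_le (by rw [h2]; exact h)
    _ = 2 * |s - t| := by rw [h2]

lemma norm_exp_I_real (t : ℝ) : ‖Complex.exp (Complex.I * t)‖ = 1 := by
  rw [Complex.norm_exp]; simp

lemma exists_qf_lb (a : Matrix (Fin 3) (Fin 3) ℝ) (ha : a.PosDef) :
    ∃ m > (0:ℝ), ∀ v : E3, m * ‖v‖ ^ 2 ≤ qf a v := by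
  have hcont : Continuous fun v : E3 => qf a v := by
    unfold qf Matrix.mulVec dotProduct
    refine continuous_finset_sum _ fun i _ => Continuous.mul ?_ ?_
    · exact continuous_finset_sum _ fun j _ =>
        continuous_const.mul (EuclideanSpace.proj j).continuous
    · exact (EuclideanSpace.proj i).continuous
  obtain ⟨v₀, hv₀mem, hmin⟩ := (isCompact_sphere (0:E3) 1).exists_isMinOn
    (NormedSpace.sphere_nonempty.mpr zero_le_one) hcont.continuousOn
  have hv₀norm : ‖v₀‖ = 1 := by simpa using mem_sphere_zero_iff_norm.mp hv₀mem
  have hv₀ne : v₀ ≠ 0 := fun h => by simp [h] at hv₀norm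
  refine ⟨qf a v₀, qf_pos a ha hv₀ne, fun v => ?_⟩
  rcases eq_or_ne v 0 with rfl | hv
  · simp [qf, show (fun j => (0:E3) j) = (0 : Fin 3 → ℝ) from rfl]
  · have hvn : ‖v‖ ≠ 0 := norm_ne_zero_iff.mpr hv
    set w : E3 := ‖v‖⁻¹ • v with hw
    have hwnorm : ‖w‖ = 1 := by
      rw [hw, norm_smul]; simp [abs_of_nonneg (norm_nonneg v)]
      field_simp
    have hwmem : w ∈ Metric.sphere (0:E3) 1 := by
      simpa [mem_sphere_zero_iff_norm] using hwnorm
    have h1 : v = ‖v‖ • w := by rw [hw, smul_smul, mul_inv_cancel₀ hvn, one_smul]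
    have h2 : qf a v = ‖v‖ ^ 2 * qf a w := by
      conv_lhs => rw [h1]
      exact qf_smul a _ w
    have h3 : qf a v₀ ≤ qf a w := hmin hwmem
    rw [h2]
    nlinarith [sq_nonneg ‖v‖]

end Stmt4Aux

open Stmt4Aux Matrix

set_option maxHeartbeats 2000000

/-- far-field asymptotics of `Γ`: for every compact `K ⊂ ℝ³` there are
`C > 0`, `R > 0` such that for `x ∈ K`, `|y| ≥ R`, `η = y/|y|`,
`|Γ(y−x,ω) − c(ξ(η)) exp(i ξ(η)·(y−x))/|y| | ≤ C/|y|²`. -/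
theorem stmt4 (a : Matrix (Fin 3) (Fin 3) ℝ) (ha : a.PosDef) (hsym : a.IsSymm)
    (κ₁ ω : ℝ) (hκ : 0 < κ₁) (hω : 0 < ω) :
    ∀ K : Set E3, IsCompact K → ∃ C > (0 : ℝ), ∃ R > (0 : ℝ),
      ∀ x ∈ K, ∀ y : E3, R ≤ ‖y‖ →
        ‖Gamma a κ₁ ω (y - x)
            - ((ffc a κ₁ ω (xiVec a κ₁ ω (fun i => ‖y‖⁻¹ * y i)) : ℝ) : ℂ) *
                Complex.exp (Complex.I *
                  ((∑ k, xiVec a κ₁ ω (fun i => ‖y‖⁻¹ * y i) k * (y k - x k) : ℝ) : ℂ)) /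
                ((‖y‖ : ℝ) : ℂ)‖ ≤ C / ‖y‖ ^ 2 := by
  intro K hK
  -- basic positive quantities
  have hdet : (0:ℝ) < a.det := ha.det_pos
  have hdetne : a.det ≠ 0 := ne_of_gt hdet
  have hdetu : IsUnit a.det := isUnit_iff_ne_zero.mpr hdetne
  set d : ℝ := Real.sqrt a.det with hd
  have hd0 : 0 < d := Real.sqrt_pos.mpr hdet
  set lam : ℝ := ω * Real.sqrt κ₁ with hlam
  have hκs : 0 < Real.sqrt κ₁ := Real.sqrt_pos.mpr hκ
  have hlam0 : 0 < lam := mul_pos hω hκs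
  set D : ℝ := 4 * Real.pi * d with hD
  have hD0 : 0 < D := by rw [hD]; positivity
  -- symmetric inverse
  have hsyminv : (a⁻¹).IsSymm := by
    unfold Matrix.IsSymm
    rw [Matrix.transpose_nonsing_inv, hsym]
  -- lower bound constant
  obtain ⟨m, hm0, hmlb⟩ := exists_qf_lb a ha
  have hsm : 0 < Real.sqrt m := Real.sqrt_pos.mpr hm0
  have hsm2 : Real.sqrt m ^ 2 = m := Real.sq_sqrt hm0.le
  -- upper bound constant
  set MB : ℝ := (∑ i, ∑ j, |a⁻¹ i j|) + 1 with hMB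
  have hSnn : (0:ℝ) ≤ ∑ i, ∑ j, |a⁻¹ i j| := by positivity
  have hMB1 : (1:ℝ) ≤ MB := by rw [hMB]; linarith only [hSnn]
  have hMB0 : (0:ℝ) < MB := lt_of_lt_of_le one_pos hMB1
  have hSle : (∑ i, ∑ j, |a⁻¹ i j|) ≤ MB := by rw [hMB]; linarith only [hSnn]
  -- bound on K
  obtain ⟨B₀, hB₀⟩ := hK.isBounded.subset_closedBall 0
  set B : ℝ := max B₀ 1 with hB
  have hB1 : (1:ℝ) ≤ B := le_max_right _ _
  have hB0 : (0:ℝ) < B := lt_of_lt_of_le one_pos hB1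
  have hxB : ∀ x ∈ K, ‖x‖ ≤ B := fun x hx => by
    have h := hB₀ hx
    rw [Metric.mem_closedBall, dist_zero_right] at h
    exact h.trans (le_max_left _ _)
  clear_value d lam MB B
  clear hB₀ hB hMB
  -- constants
  set C₁ : ℝ := MB * B ^ 2 + MB ^ 2 * B ^ 2 / m with hC₁
  have hC₁0 : 0 < C₁ := by
    rw [hC₁]
    have h1 : 0 < MB * B ^ 2 := by positivity
    have h2 : 0 ≤ MB ^ 2 * B ^ 2 / m := by positivity
    linarith only [h1, h2]
  set C₂ : ℝ := C₁ / Real.sqrt m + MB * B / Real.sqrt m with hC₂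
  have hC₂0 : 0 < C₂ := by
    rw [hC₂]
    have h1 : 0 < C₁ / Real.sqrt m := div_pos hC₁0 hsm
    have h2 : 0 ≤ MB * B / Real.sqrt m := by positivity
    linarith only [h1, h2]
  set R : ℝ := 1 + 2 * B + 2 * MB * B / m + lam * C₁ / Real.sqrt m with hR
  have hterm1 : (0:ℝ) ≤ 2 * B := by positivity
  have hterm2 : (0:ℝ) ≤ 2 * MB * B / m := by positivity
  have hterm3 : (0:ℝ) ≤ lam * C₁ / Real.sqrt m := by positivity
  have hR0 : 0 < R := by rw [hR]; linarith only [hterm1, hterm2, hterm3]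
  set D' := D * m with hD'
  have hDm0 : 0 < D * m := mul_pos hD0 hm0
  set C : ℝ := (2 * lam * C₁ + 2 * C₂) / (D * m) + 1 with hC
  have hC0 : 0 < C := by
    rw [hC]
    have h1 : 0 ≤ (2 * lam * C₁ + 2 * C₂) / (D * m) := by positivity
    linarith only [h1]
  clear_value C₁ C₂ R C
  refine ⟨C, hC0, R, hR0, fun x hx y hy => ?_⟩
  -- basic facts about t = ‖y‖
  set t : ℝ := ‖y‖ with ht
  have ht1 : (1:ℝ) ≤ t :=
    le_trans (by rw [hR]; linarith only [hterm1, hterm2, hterm3]) hy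
  have ht2B : 2 * B ≤ t :=
    le_trans (by rw [hR]; linarith only [hterm1, hterm2, hterm3]) hy
  have htMB : 2 * MB * B / m ≤ t :=
    le_trans (by rw [hR]; linarith only [hterm1, hterm2, hterm3]) hy
  have htlam : lam * C₁ / Real.sqrt m ≤ t :=
    le_trans (by rw [hR]; linarith only [hterm1, hterm2, hterm3]) hy
  have ht0 : (0:ℝ) < t := lt_of_lt_of_le one_pos ht1
  have htne : t ≠ 0 := ne_of_gt ht0
  have hyne : y ≠ 0 := by
    intro h
    rw [ht, h, norm_zero] at ht1
    linarith only [ht1]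
  have hxBn : ‖x‖ ≤ B := hxB x hx
  have hsmt0 : 0 < Real.sqrt m * t := mul_pos hsm ht0
  -- main scalar quantities
  set u : Fin 3 → ℝ := a⁻¹ *ᵥ (fun j => y j) with hu
  set Q : ℝ := qf a y with hQ
  have hQdot : Q = ∑ i, u i * y i := rfl
  set bx : ℝ := u ⬝ᵥ (fun j => x j) with hbx
  have hbxsum : bx = ∑ k, u k * x k := hbx
  set qx : ℝ := qf a x with hqx
  set s : ℝ := Real.sqrt (qf a (y - x)) with hs
  clear_value Q bx qx s
  have hs0 : 0 ≤ s := by rw [hs]; exact Real.sqrt_nonneg _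
  -- bounds
  have hQlb : m * t ^ 2 ≤ Q := by rw [hQ, ht]; exact hmlb y
  have hQpos : 0 < Q := lt_of_lt_of_le (mul_pos hm0 (pow_pos ht0 2)) hQlb
  set sQ : ℝ := Real.sqrt Q with hsQ
  have hsQ0 : 0 < sQ := Real.sqrt_pos.mpr hQpos
  have hsQ2 : sQ ^ 2 = Q := Real.sq_sqrt hQpos.le
  clear_value sQ
  have hsQlb : Real.sqrt m * t ≤ sQ := by
    rw [hsQ, Real.le_sqrt hsmt0.le hQpos.le]
    calc (Real.sqrt m * t) ^ 2 = m * t ^ 2 := by rw [mul_pow, hsm2]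
      _ ≤ Q := hQlb
  have hbxb : |bx| ≤ MB * t * B := by
    have h := qd_bound a⁻¹ (fun j => y j) (fun j => x j) t B
      (fun j => ht ▸ coord_le y j) (fun j => le_trans (coord_le x j) hxBn)
    rw [hbx, hu]
    refine le_trans h ?_
    exact mul_le_mul_of_nonneg_right (mul_le_mul_of_nonneg_right hSle ht0.le) hB0.le
  have hqxb : qx ≤ MB * B ^ 2 := by
    have h := qd_bound a⁻¹ (fun j => x j) (fun j => x j) B B
      (fun j => le_trans (coord_le x j) hxBn) (fun j => le_trans (coord_le x j) hxBn)
    have h2 : qx ≤ (∑ i, ∑ j, |a⁻¹ i j|) * B * B := le_trans (le_abs_self _) (hqx ▸ h)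
    calc qx ≤ (∑ i, ∑ j, |a⁻¹ i j|) * B * B := h2
      _ ≤ MB * B * B :=
          mul_le_mul_of_nonneg_right (mul_le_mul_of_nonneg_right hSle hB0.le) hB0.le
      _ = MB * B ^ 2 := by ring
  have hqx0 : 0 ≤ qx := hqx ▸ le_trans (mul_nonneg hm0.le (sq_nonneg _)) (hmlb x)
  -- expansion
  have hexp : qf a (y - x) = Q - 2 * bx + qx := by
    rw [hQ, hbx, hqx, hu]; exact expand a hsyminv y x
  have hqfyx0 : 0 ≤ qf a (y - x) :=
    le_trans (mul_nonneg hm0.le (sq_nonneg _)) (hmlb (y - x))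
  have hs2 : s ^ 2 = qf a (y - x) := by rw [hs]; exact Real.sq_sqrt hqfyx0
  -- lower bound on s
  have hyx : t - B ≤ ‖y - x‖ := by
    rw [ht]
    have h := norm_sub_norm_le y x
    linarith only [h, hxBn]
  have hslb : Real.sqrt m * t / 2 ≤ s := by
    rw [hs, Real.le_sqrt (by linarith only [hsmt0]) hqfyx0]
    have h1 : m * ‖y - x‖ ^ 2 ≤ qf a (y - x) := hmlb _
    have h2 : t / 2 ≤ ‖y - x‖ := by linarith only [hyx, ht2B]
    have key : (Real.sqrt m * t / 2) ^ 2 = m * (t / 2) ^ 2 := by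
      rw [div_pow, mul_pow, hsm2]; ring
    have h4 : (t / 2) ^ 2 ≤ ‖y - x‖ ^ 2 :=
      pow_le_pow_left₀ (by linarith only [ht0]) h2 2
    have h3 : m * (t / 2) ^ 2 ≤ m * ‖y - x‖ ^ 2 :=
      mul_le_mul_of_nonneg_left h4 hm0.le
    linarith only [key, h3, h1]
  -- P and its properties
  set P : ℝ := (Q - bx) / sQ with hP
  clear_value P
  have hPalt : P = sQ - bx / sQ := by
    rw [hP, ← hsQ2]; field_simp
  have habs_bx : bx ≤ MB * t * B := le_trans (le_abs_self _) hbxb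
  have hbxsQ : bx / sQ ≤ MB * B / Real.sqrt m := by
    rw [div_le_div_iff₀ hsQ0 hsm]
    calc bx * Real.sqrt m ≤ (MB * t * B) * Real.sqrt m :=
          mul_le_mul_of_nonneg_right habs_bx hsm.le
      _ = MB * B * (Real.sqrt m * t) := by ring
      _ ≤ MB * B * sQ := mul_le_mul_of_nonneg_left hsQlb
          (mul_nonneg hMB0.le hB0.le)
  have hPlb : Real.sqrt m * t / 2 ≤ P := by
    rw [hPalt]
    have h5 : 2 * MB * B ≤ m * t := by
      rw [div_le_iff₀ hm0] at htMB
      linarith only [htMB]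
    have h6 : MB * B / Real.sqrt m ≤ Real.sqrt m * t / 2 := by
      rw [div_le_div_iff₀ hsm two_pos]
      have h7 : Real.sqrt m * t * Real.sqrt m = m * t := by
        calc Real.sqrt m * t * Real.sqrt m = Real.sqrt m ^ 2 * t := by ring
          _ = m * t := by rw [hsm2]
      linarith only [h5, h7]
    linarith only [hsQlb, hbxsQ, h6]
  have hs_pos : 0 < s := lt_of_lt_of_le (by linarith only [hsmt0]) hslb
  have hP0 : 0 < P := lt_of_lt_of_le (by linarith only [hsmt0]) hPlb
  -- s² − P²
  have hsP2 : s ^ 2 - P ^ 2 = qx - bx ^ 2 / Q := by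
    rw [hs2, hexp, hP, ← hsQ2]
    field_simp
    ring
  have hbb : bx ^ 2 / Q ≤ MB ^ 2 * B ^ 2 / m := by
    rw [div_le_div_iff₀ hQpos hm0]
    have h1 : bx ^ 2 ≤ (MB * t * B) ^ 2 := by
      rw [← sq_abs bx]
      exact pow_le_pow_left₀ (abs_nonneg _) hbxb 2
    calc bx ^ 2 * m ≤ (MB * t * B) ^ 2 * m := mul_le_mul_of_nonneg_right h1 hm0.le
      _ = MB ^ 2 * B ^ 2 * (m * t ^ 2) := by ring
      _ ≤ MB ^ 2 * B ^ 2 * Q := mul_le_mul_of_nonneg_left hQlb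
          (mul_nonneg (sq_nonneg _) (sq_nonneg _))
  have hbbQ0 : 0 ≤ bx ^ 2 / Q := div_nonneg (sq_nonneg _) hQpos.le
  have hMBB0 : (0:ℝ) ≤ MB * B ^ 2 := mul_nonneg hMB0.le (sq_nonneg _)
  have hMBB0' : (0:ℝ) ≤ MB ^ 2 * B ^ 2 / m :=
    div_nonneg (mul_nonneg (sq_nonneg _) (sq_nonneg _)) hm0.le
  have hC1b : |s ^ 2 - P ^ 2| ≤ C₁ := by
    rw [hsP2, abs_le, hC₁]
    constructor
    · linarith only [hqx0, hbb, hMBB0]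
    · linarith only [hqxb, hbbQ0, hMBB0']
  -- |s − P|
  have hsPpos : (0:ℝ) < s + P := by linarith only [hs_pos, hP0]
  have hsPd : s - P = (s ^ 2 - P ^ 2) / (s + P) := by
    have hsP0 : (s + P) ≠ 0 := ne_of_gt hsPpos
    field_simp
    ring
  have hsPabs : |s - P| ≤ C₁ / (Real.sqrt m * t) := by
    rw [hsPd, abs_div, abs_of_pos hsPpos]
    have h1 : Real.sqrt m * t ≤ s + P := by linarith only [hslb, hPlb]
    exact div_le_div₀ hC₁0.le hC1b hsmt0 h1
  -- |s − √Q| ≤ C₂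
  have hPsQ : |P - sQ| ≤ MB * B / Real.sqrt m := by
    have h1 : |P - sQ| = |bx| / sQ := by
      rw [hPalt, show sQ - bx / sQ - sQ = -(bx / sQ) by ring, abs_neg, abs_div,
        abs_of_pos hsQ0]
    rw [h1, div_le_div_iff₀ hsQ0 hsm]
    calc |bx| * Real.sqrt m ≤ (MB * t * B) * Real.sqrt m :=
          mul_le_mul_of_nonneg_right hbxb hsm.le
      _ = MB * B * (Real.sqrt m * t) := by ring
      _ ≤ MB * B * sQ := mul_le_mul_of_nonneg_left hsQlb
          (mul_nonneg hMB0.le hB0.le)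
  have hsQdiff : |s - sQ| ≤ C₂ := by
    have h3 : |s - sQ| ≤ |s - P| + |P - sQ| := by
      calc |s - sQ| = |(s - P) + (P - sQ)| := by rw [sub_add_sub_cancel]
        _ ≤ |s - P| + |P - sQ| := abs_add_le _ _
    have h4 : C₁ / (Real.sqrt m * t) ≤ C₁ / Real.sqrt m := by
      apply div_le_div₀ hC₁0.le le_rfl hsm
      calc Real.sqrt m = Real.sqrt m * 1 := by ring
        _ ≤ Real.sqrt m * t := mul_le_mul_of_nonneg_left ht1 hsm.le
    rw [hC₂]
    linarith only [h3, hsPabs, h4, hPsQ]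
  -- ### rewriting the goal
  have hGam : Gamma a κ₁ ω (y - x)
      = -Complex.exp (Complex.I * ((lam * s : ℝ) : ℂ)) / ((D * s : ℝ) : ℂ) := by
    unfold Gamma
    rw [← hs]
    have e1 : Complex.I * (ω : ℂ) * ((Real.sqrt κ₁ : ℝ) : ℂ) * ((s : ℝ) : ℂ)
        = Complex.I * ((lam * s : ℝ) : ℂ) := by
      rw [hlam]; push_cast; ring
    rw [e1, hD, hd]
  -- far-field side computations
  have hmulveta : a⁻¹ *ᵥ (fun i => t⁻¹ * y i) = t⁻¹ • u := by
    rw [hu, show (fun i => t⁻¹ * y i) = t⁻¹ • (fun j => y j) from rfl,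
      Matrix.mulVec_smul]
  have hqeta : (∑ i, (a⁻¹ *ᵥ (fun i => t⁻¹ * y i)) i * (t⁻¹ * y i))
      = t⁻¹ ^ 2 * Q := by
    rw [hmulveta, hQdot, Finset.mul_sum]
    refine Finset.sum_congr rfl fun i _ => ?_
    simp only [Pi.smul_apply, smul_eq_mul]
    ring
  have hsqeta : Real.sqrt (∑ i, (a⁻¹ *ᵥ (fun i => t⁻¹ * y i)) i * (t⁻¹ * y i))
      = t⁻¹ * sQ := by
    rw [hqeta, Real.sqrt_mul (sq_nonneg _),
      Real.sqrt_sq (inv_nonneg.mpr ht0.le), hsQ]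
  have hxiveq : xiVec a κ₁ ω (fun i => t⁻¹ * y i) = (lam * sQ⁻¹) • u := by
    unfold xiVec
    rw [hsqeta, hmulveta, smul_smul]
    congr 1
    rw [mul_inv, inv_inv, hlam]
    field_simp
  have hAxi : a *ᵥ xiVec a κ₁ ω (fun i => t⁻¹ * y i)
      = (lam * sQ⁻¹) • (fun j => y j) := by
    rw [hxiveq, Matrix.mulVec_smul, hu, Matrix.mulVec_mulVec,
      Matrix.mul_nonsing_inv a hdetu, Matrix.one_mulVec]
  have hsum2 : (∑ k, (a *ᵥ xiVec a κ₁ ω (fun i => t⁻¹ * y i)) k ^ 2)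
      = (lam * sQ⁻¹ * t) ^ 2 := by
    rw [hAxi]
    simp only [Pi.smul_apply, smul_eq_mul, mul_pow]
    rw [← Finset.mul_sum, show (∑ i, y i ^ 2) = t ^ 2 from by rw [ht]; exact sum_sq_eq y]
  have hlamsQt0 : (0:ℝ) ≤ lam * sQ⁻¹ * t :=
    mul_nonneg (mul_nonneg hlam0.le (inv_nonneg.mpr hsQ0.le)) ht0.le
  have hsd0 : Real.sqrt a.det ≠ 0 := (Real.sqrt_pos.mpr hdet).ne'
  have hffc2 : ffc a κ₁ ω (xiVec a κ₁ ω (fun i => t⁻¹ * y i)) = -(t * sQ⁻¹) / D := by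
    unfold ffc
    rw [hsum2, Real.sqrt_sq hlamsQt0, hD, hd, hlam]
    field_simp
  have hphase2 : (∑ k, xiVec a κ₁ ω (fun i => t⁻¹ * y i) k * (y k - x k)) = lam * P := by
    rw [hxiveq]
    simp only [Pi.smul_apply, smul_eq_mul]
    have step : (∑ k, lam * sQ⁻¹ * u k * (y k - x k))
        = lam * sQ⁻¹ * ((∑ k, u k * y k) - ∑ k, u k * x k) := by
      rw [mul_sub, Finset.mul_sum, Finset.mul_sum, ← Finset.sum_sub_distrib]
      exact Finset.sum_congr rfl fun k _ => by ring
    rw [step, ← hQdot, ← hbxsum, hP]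
    field_simp
  -- rewrite norm goal
  have htpow : t ^ 2 = ‖y‖ ^ 2 := by rw [ht]
  rw [hGam, hffc2, hphase2, ← htpow]
  have hFFeq : ((-(t * sQ⁻¹) / D : ℝ) : ℂ) * Complex.exp (Complex.I * ((lam * P : ℝ) : ℂ))
        / ((t : ℝ) : ℂ)
      = -Complex.exp (Complex.I * ((lam * P : ℝ) : ℂ)) / ((D * sQ : ℝ) : ℂ) := by
    have htne' : (t : ℂ) ≠ 0 := by exact_mod_cast htne
    have hsQne : (sQ : ℂ) ≠ 0 := by exact_mod_cast hsQ0.ne'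
    have hDne : (D : ℂ) ≠ 0 := by exact_mod_cast hD0.ne'
    push_cast
    field_simp
  rw [hFFeq]
  -- ### the final estimate
  set Es : ℂ := Complex.exp (Complex.I * ((lam * s : ℝ) : ℂ)) with hEs
  set Ep : ℂ := Complex.exp (Complex.I * ((lam * P : ℝ) : ℂ)) with hEp
  have hDs0 : (0:ℝ) < D * s := mul_pos hD0 hs_pos
  have hDsQ0 : (0:ℝ) < D * sQ := mul_pos hD0 hsQ0
  have hsplit : -Es / ((D * s : ℝ) : ℂ) - -Ep / ((D * sQ : ℝ) : ℂ)
      = (Ep - Es) / ((D * sQ : ℝ) : ℂ) + (((s - sQ) / (D * sQ * s) : ℝ) : ℂ) * Es := by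
    have h1 : ((D * s : ℝ) : ℂ) ≠ 0 := by exact_mod_cast hDs0.ne'
    have h2 : ((D * sQ : ℝ) : ℂ) ≠ 0 := by exact_mod_cast hDsQ0.ne'
    have h3 : ((D * sQ * s : ℝ) : ℂ) ≠ 0 := by
      exact_mod_cast (mul_pos hDsQ0 hs_pos).ne'
    have hsC : (s : ℂ) ≠ 0 := by exact_mod_cast hs_pos.ne'
    have hsQC : (sQ : ℂ) ≠ 0 := by exact_mod_cast hsQ0.ne'
    have hDC : (D : ℂ) ≠ 0 := by exact_mod_cast hD0.ne'
    push_cast at h1 h2 h3 ⊢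
    field_simp
    ring
  rw [hsplit]
  refine le_trans (norm_add_le _ _) ?_
  -- term 1
  have hlamPs : |lam * P - lam * s| ≤ lam * (C₁ / (Real.sqrt m * t)) := by
    rw [show lam * P - lam * s = lam * (P - s) by ring, abs_mul, abs_of_pos hlam0,
      abs_sub_comm]
    exact mul_le_mul_of_nonneg_left hsPabs hlam0.le
  have hone : lam * (C₁ / (Real.sqrt m * t)) ≤ 1 := by
    have heq : lam * (C₁ / (Real.sqrt m * t)) = (lam * C₁ / Real.sqrt m) / t := by
      field_simp
    rw [heq, div_le_one ht0]
    exact htlam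
  have hT1 : ‖(Ep - Es) / ((D * sQ : ℝ) : ℂ)‖
      ≤ (2 * lam * (C₁ / (Real.sqrt m * t))) / (D * (Real.sqrt m * t)) := by
    rw [norm_div, Complex.norm_real, Real.norm_eq_abs, abs_of_pos hDsQ0]
    have hnum : ‖Ep - Es‖ ≤ 2 * lam * (C₁ / (Real.sqrt m * t)) := by
      have h := exp_close (lam * P) (lam * s) (le_trans hlamPs hone)
      rw [← hEp, ← hEs] at h
      calc ‖Ep - Es‖ ≤ 2 * |lam * P - lam * s| := h
        _ ≤ 2 * (lam * (C₁ / (Real.sqrt m * t))) :=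
            mul_le_mul_of_nonneg_left hlamPs two_pos.le
        _ = 2 * lam * (C₁ / (Real.sqrt m * t)) := by ring
    have hden : D * (Real.sqrt m * t) ≤ D * sQ :=
      mul_le_mul_of_nonneg_left hsQlb hD0.le
    have hnum0 : (0:ℝ) ≤ 2 * lam * (C₁ / (Real.sqrt m * t)) :=
      mul_nonneg (mul_nonneg (by norm_num) hlam0.le)
        (div_nonneg hC₁0.le hsmt0.le)
    exact div_le_div₀ hnum0 hnum (mul_pos hD0 hsmt0) hden
  -- term 2
  have hT2 : ‖(((s - sQ) / (D * sQ * s) : ℝ) : ℂ) * Es‖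
      ≤ C₂ / (D * (Real.sqrt m * t) * (Real.sqrt m * t / 2)) := by
    rw [norm_mul, hEs, norm_exp_I_real, mul_one, Complex.norm_real, Real.norm_eq_abs,
      abs_div, abs_of_pos (mul_pos hDsQ0 hs_pos)]
    have hden : D * (Real.sqrt m * t) * (Real.sqrt m * t / 2) ≤ D * sQ * s := by
      calc D * (Real.sqrt m * t) * (Real.sqrt m * t / 2)
          ≤ D * sQ * (Real.sqrt m * t / 2) := by
            refine mul_le_mul_of_nonneg_right ?_ (by linarith only [hsmt0])
            exact mul_le_mul_of_nonneg_left hsQlb hD0.le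
        _ ≤ D * sQ * s := mul_le_mul_of_nonneg_left hslb hDsQ0.le
    have hdpos : (0:ℝ) < D * (Real.sqrt m * t) * (Real.sqrt m * t / 2) :=
      mul_pos (mul_pos hD0 hsmt0) (by linarith only [hsmt0])
    exact div_le_div₀ hC₂0.le hsQdiff hdpos hden
  -- combine
  have hfin1 : (2 * lam * (C₁ / (Real.sqrt m * t))) / (D * (Real.sqrt m * t))
      = 2 * lam * C₁ / (D * m * t ^ 2) := by
    have h1 : 2 * lam * (C₁ / (Real.sqrt m * t)) = (2 * lam * C₁) / (Real.sqrt m * t) := by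
      ring
    rw [h1, div_div]
    congr 1
    calc Real.sqrt m * t * (D * (Real.sqrt m * t)) = D * (Real.sqrt m ^ 2 * t ^ 2) := by
          ring
      _ = D * m * t ^ 2 := by rw [hsm2]; ring
  have hfin2 : C₂ / (D * (Real.sqrt m * t) * (Real.sqrt m * t / 2))
      = 2 * C₂ / (D * m * t ^ 2) := by
    have h1 : D * (Real.sqrt m * t) * (Real.sqrt m * t / 2) = (D * m * t ^ 2) / 2 := by
      calc D * (Real.sqrt m * t) * (Real.sqrt m * t / 2)
          = D * (Real.sqrt m ^ 2 * t ^ 2) / 2 := by ring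
        _ = (D * m * t ^ 2) / 2 := by rw [hsm2]; ring
    rw [h1, div_div_eq_mul_div, mul_comm]
  rw [hfin1] at hT1
  rw [hfin2] at hT2
  have hsum3 : 2 * lam * C₁ / (D * m * t ^ 2) + 2 * C₂ / (D * m * t ^ 2) ≤ C / t ^ 2 := by
    rw [← add_div]
    have heq2 : (2 * lam * C₁ + 2 * C₂) / (D * m * t ^ 2)
        = ((2 * lam * C₁ + 2 * C₂) / (D * m)) / t ^ 2 := by
      rw [div_div]
    rw [heq2]
    have hXC : (2 * lam * C₁ + 2 * C₂) / (D * m) ≤ C := by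
      rw [hC]
      linarith only []
    have hX0 : (0:ℝ) ≤ (2 * lam * C₁ + 2 * C₂) / (D * m) :=
      div_nonneg (by positivity) hDm0.le
    exact div_le_div₀ hC0.le hXC (pow_pos ht0 2) le_rfl
  linarith only [hT1, hT2, hsum3]
end
end

section
/- Let 𝐚 = [a_{kj}]_{k,j=1}^3 be a real symmetric positive definite 3×3 matrix, κ₁ > 0 and ω ∈ ℝ. Suppose R₀ > 0, C₀ > 0, and v : {x ∈ ℝ³ : |x| ≥ R₀} → ℂ is differentiable and satisfies the radiation-type estimates |v(x)| ≤ C₀/|x| and |∂v(x)/∂x_k − i ξ_k(x/|x|) v(x)| ≤ C₀/|x|² for all |x| ≥ R₀ and k = 1,2,3. Then there exists C₁ > 0 such that for all |x| ≥ R₀, writing η = x/|x|, | conj(v(x)) · Σ_{k,j=1}^3 a_{kj} η_k ∂v(x)/∂x_j − i ω κ₁^{1/2} (𝐚⁻¹η·η)^{−1/2} |v(x)|² | ≤ C₁/|x|³. -/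
open MeasureTheory Filter
open scoped Topology BigOperators

noncomputable section

/-- if `v` satisfies the radiation-type estimates
`|v(x)| ≤ C₀/|x|` and `|∂_k v(x) − i ξ_k(x/|x|) v(x)| ≤ C₀/|x|²` for `|x| ≥ R₀`,
then there is `C₁ > 0` such that for all `|x| ≥ R₀`, with `η = x/|x|`,
`| conj(v(x)) Σ a_{kj} η_k ∂_j v(x) − i ω κ₁^{1/2} (𝐚⁻¹η·η)^{−1/2} |v(x)|² | ≤ C₁/|x|³`. -/
theorem stmt7 (a : Matrix (Fin 3) (Fin 3) ℝ) (ha : a.PosDef) (hsym : a.IsSymm)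
    (κ₁ ω : ℝ) (hκ : 0 < κ₁)
    (R₀ C₀ : ℝ) (hR₀ : 0 < R₀) (hC₀ : 0 < C₀) (v : E3 → ℂ)
    (hdiff : ∀ x : E3, R₀ ≤ ‖x‖ → DifferentiableAt ℝ v x)
    (hv1 : ∀ x : E3, R₀ ≤ ‖x‖ → ‖v x‖ ≤ C₀ / ‖x‖)
    (hv2 : ∀ x : E3, R₀ ≤ ‖x‖ → ∀ k : Fin 3,
      ‖fderiv ℝ v x (EuclideanSpace.single k 1)
          - Complex.I * ((xiVec a κ₁ ω (fun i => ‖x‖⁻¹ * x i) k : ℝ) : ℂ) * v x‖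
        ≤ C₀ / ‖x‖ ^ 2) :
    ∃ C₁ > (0 : ℝ), ∀ x : E3, R₀ ≤ ‖x‖ →
      ‖(starRingEnd ℂ) (v x) *
            (∑ k : Fin 3, ∑ j : Fin 3, (a k j : ℂ) * ((‖x‖⁻¹ * x k : ℝ) : ℂ) *
              fderiv ℝ v x (EuclideanSpace.single j 1))
          - Complex.I *
            ((ω * Real.sqrt κ₁ *
                (Real.sqrt (∑ i, a⁻¹.mulVec (fun i => ‖x‖⁻¹ * x i) i * (‖x‖⁻¹ * x i)))⁻¹
              : ℝ) : ℂ) * ((‖v x‖ ^ 2 : ℝ) : ℂ)‖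
        ≤ C₁ / ‖x‖ ^ 3 := by
  set M : ℝ := ∑ k : Fin 3, ∑ j : Fin 3, |a k j| with hM
  have hMnn : 0 ≤ M := Finset.sum_nonneg fun k _ =>
    Finset.sum_nonneg fun j _ => abs_nonneg _
  refine ⟨M * C₀ ^ 2 + 1, by positivity, fun x hx => ?_⟩
  have hxp : 0 < ‖x‖ := lt_of_lt_of_le hR₀ hx
  set η : Fin 3 → ℝ := fun i => ‖x‖⁻¹ * x i with hη
  set c : ℝ := ω * Real.sqrt κ₁ *
      (Real.sqrt (∑ i, a⁻¹.mulVec η i * η i))⁻¹ with hc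
  set w : Fin 3 → ℝ := a⁻¹.mulVec η with hw
  set D : Fin 3 → ℂ := fun j => fderiv ℝ v x (EuclideanSpace.single j 1) with hD
  set Er : Fin 3 → ℂ := fun j => D j - Complex.I * ((c * w j : ℝ) : ℂ) * v x with hEr
  -- unit vector
  have hnormsq : ∑ i, η i ^ 2 = 1 := by
    have h2 : ‖x‖ ^ 2 = ∑ i, x i ^ 2 := by
      rw [EuclideanSpace.norm_eq, Real.sq_sqrt (by positivity)]
      simp [sq_abs]
    have : ∑ i, η i ^ 2 = ‖x‖⁻¹ ^ 2 * ∑ i, x i ^ 2 := by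
      rw [Finset.mul_sum]; exact Finset.sum_congr rfl fun i _ => by rw [hη]; ring
    rw [this, ← h2]
    field_simp
  -- a * w = η
  have haw : ∀ k, ∑ j, a k j * w j = η k := by
    intro k
    have : a.mulVec w = η := by
      rw [hw, Matrix.mulVec_mulVec,
        Matrix.mul_nonsing_inv _ ((Matrix.isUnit_iff_isUnit_det _).mp ha.isUnit),
        Matrix.one_mulVec]
    simpa [Matrix.mulVec, dotProduct] using congrFun this k
  -- real key identity
  have hrealkey : ∑ k, ∑ j, a k j * η k * (c * w j) = c := by
    have : ∀ k, ∑ j, a k j * η k * (c * w j) = c * η k * η k := by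
      intro k
      have : ∑ j, a k j * η k * (c * w j) = (c * η k) * ∑ j, a k j * w j := by
        rw [Finset.mul_sum]; exact Finset.sum_congr rfl fun j _ => by ring
      rw [this, haw]
    rw [Finset.sum_congr rfl fun k _ => this k]
    have : ∑ k, c * η k * η k = c * ∑ k, η k ^ 2 := by
      rw [Finset.mul_sum]; exact Finset.sum_congr rfl fun k _ => by ring
    rw [this, hnormsq, mul_one]
  -- complex key identity
  have hkey : (∑ k : Fin 3, ∑ j : Fin 3, (a k j : ℂ) * ((η k : ℝ) : ℂ) *
      (Complex.I * ((c * w j : ℝ) : ℂ) * v x)) = Complex.I * (c : ℂ) * v x := by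
    have : (∑ k : Fin 3, ∑ j : Fin 3, (a k j : ℂ) * ((η k : ℝ) : ℂ) *
        (Complex.I * ((c * w j : ℝ) : ℂ) * v x)) =
        (Complex.I * v x) * ((∑ k, ∑ j, a k j * η k * (c * w j) : ℝ) : ℂ) := by
      push_cast
      rw [Finset.mul_sum]
      refine Finset.sum_congr rfl fun k _ => ?_
      rw [Finset.mul_sum]
      exact Finset.sum_congr rfl fun j _ => by ring
    rw [this, hrealkey]; ring
  -- xiVec unfold
  have hxi : ∀ j : Fin 3, xiVec a κ₁ ω η j = c * w j := fun j => rfl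
  -- decomposition of the target
  have hdecomp : (starRingEnd ℂ) (v x) *
        (∑ k : Fin 3, ∑ j : Fin 3, (a k j : ℂ) * ((η k : ℝ) : ℂ) * D j)
      - Complex.I * (c : ℂ) * ((‖v x‖ ^ 2 : ℝ) : ℂ)
      = (starRingEnd ℂ) (v x) *
        (∑ k : Fin 3, ∑ j : Fin 3, (a k j : ℂ) * ((η k : ℝ) : ℂ) * Er j) := by
    have hsplit : (∑ k : Fin 3, ∑ j : Fin 3, (a k j : ℂ) * ((η k : ℝ) : ℂ) * D j)
        = (∑ k : Fin 3, ∑ j : Fin 3, (a k j : ℂ) * ((η k : ℝ) : ℂ) * Er j)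
          + Complex.I * (c : ℂ) * v x := by
      rw [← hkey, ← Finset.sum_add_distrib]
      refine Finset.sum_congr rfl fun k _ => ?_
      rw [← Finset.sum_add_distrib]
      refine Finset.sum_congr rfl fun j _ => ?_
      rw [hEr]; ring
    have hconj : (starRingEnd ℂ) (v x) * v x = ((‖v x‖ ^ 2 : ℝ) : ℂ) := by
      rw [Complex.conj_mul']; push_cast; ring
    rw [hsplit, mul_add, ← hconj]; ring
  rw [show (∑ k : Fin 3, ∑ j : Fin 3, (a k j : ℂ) * ((‖x‖⁻¹ * x k : ℝ) : ℂ) *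
        fderiv ℝ v x (EuclideanSpace.single j 1))
      = ∑ k : Fin 3, ∑ j : Fin 3, (a k j : ℂ) * ((η k : ℝ) : ℂ) * D j from rfl,
    hdecomp]
  -- now estimate
  have hηle : ∀ k, |η k| ≤ 1 := by
    intro k
    have h1 : η k ^ 2 ≤ 1 := by
      rw [← hnormsq]
      exact Finset.single_le_sum (f := fun i => η i ^ 2)
        (fun i _ => sq_nonneg _) (Finset.mem_univ k)
    calc |η k| = Real.sqrt (η k ^ 2) := (Real.sqrt_sq_eq_abs _).symm
    _ ≤ Real.sqrt 1 := Real.sqrt_le_sqrt h1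
    _ = 1 := Real.sqrt_one
  have hErle : ∀ j, ‖Er j‖ ≤ C₀ / ‖x‖ ^ 2 := by
    intro j
    exact hv2 x hx j
  have hterm : ∀ k j : Fin 3, ‖(a k j : ℂ) * ((η k : ℝ) : ℂ) * Er j‖
      ≤ |a k j| * (C₀ / ‖x‖ ^ 2) := by
    intro k j
    rw [norm_mul, norm_mul, Complex.norm_real, Complex.norm_real,
      Real.norm_eq_abs, Real.norm_eq_abs]
    calc |a k j| * |η k| * ‖Er j‖ ≤ |a k j| * 1 * (C₀ / ‖x‖ ^ 2) := by
          apply mul_le_mul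
          · exact mul_le_mul_of_nonneg_left (hηle k) (abs_nonneg _)
          · exact hErle j
          · exact norm_nonneg _
          · positivity
    _ = |a k j| * (C₀ / ‖x‖ ^ 2) := by ring
  have hsumle : ‖∑ k : Fin 3, ∑ j : Fin 3, (a k j : ℂ) * ((η k : ℝ) : ℂ) * Er j‖
      ≤ M * (C₀ / ‖x‖ ^ 2) := by
    calc ‖∑ k : Fin 3, ∑ j : Fin 3, (a k j : ℂ) * ((η k : ℝ) : ℂ) * Er j‖
        ≤ ∑ k : Fin 3, ∑ j : Fin 3, ‖(a k j : ℂ) * ((η k : ℝ) : ℂ) * Er j‖ := by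
          refine (norm_sum_le _ _).trans ?_
          exact Finset.sum_le_sum fun k _ => norm_sum_le _ _
    _ ≤ ∑ k : Fin 3, ∑ j : Fin 3, |a k j| * (C₀ / ‖x‖ ^ 2) :=
          Finset.sum_le_sum fun k _ => Finset.sum_le_sum fun j _ => hterm k j
    _ = M * (C₀ / ‖x‖ ^ 2) := by
          rw [hM, Finset.sum_mul]
          exact Finset.sum_congr rfl fun k _ => by rw [Finset.sum_mul]
  calc ‖(starRingEnd ℂ) (v x) *
        (∑ k : Fin 3, ∑ j : Fin 3, (a k j : ℂ) * ((η k : ℝ) : ℂ) * Er j)‖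
      = ‖v x‖ * ‖∑ k : Fin 3, ∑ j : Fin 3, (a k j : ℂ) * ((η k : ℝ) : ℂ) * Er j‖ := by
        rw [norm_mul, RCLike.norm_conj]
  _ ≤ (C₀ / ‖x‖) * (M * (C₀ / ‖x‖ ^ 2)) := by
        apply mul_le_mul (hv1 x hx) hsumle (norm_nonneg _) (by positivity)
  _ = M * C₀ ^ 2 / ‖x‖ ^ 3 := by field_simp
  _ ≤ (M * C₀ ^ 2 + 1) / ‖x‖ ^ 3 := by
        apply div_le_div_of_nonneg_right ?_ (by positivity)
        linarith
end
end

section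
/- Let 𝐚 = [a_{kj}]_{k,j=1}^3 be a real symmetric positive definite 3×3 matrix, κ₁ > 0 and ω ∈ ℝ with ω ≠ 0. Suppose R₀ > 0, C₀ > 0, and v : {x ∈ ℝ³ : |x| ≥ R₀} → ℂ is continuously differentiable and satisfies |v(x)| ≤ C₀/|x| and |∂v(x)/∂x_k − i ξ_k(x/|x|) v(x)| ≤ C₀/|x|² for all |x| ≥ R₀ and k = 1,2,3. For R ≥ R₀ let Σ_R denote the sphere of radius R centered at the origin with its surface measure dσ, and set T₁v(x) := Σ_{k,j=1}^3 a_{kj} (x_k/|x|) ∂v(x)/∂x_j. Then lim_{R→∞} Im ∫_{Σ_R} conj(v(x)) T₁v(x) dσ(x) = 0 if and only if lim_{R→∞} ∫_{Σ_R} |v(x)|² dσ(x) = 0. -/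
open MeasureTheory Filter
open scoped Topology BigOperators

noncomputable section

/-- The anisotropic co-normal derivative `T₁v(x) = Σ a_{kj} (x_k/|x|) ∂_j v(x)`. -/
def T1 (a : Matrix (Fin 3) (Fin 3) ℝ) (v : E3 → ℂ) (x : E3) : ℂ :=
  ∑ k : Fin 3, ∑ j : Fin 3,
    (a k j : ℂ) * ((x k / ‖x‖ : ℝ) : ℂ) * fderiv ℝ v x (EuclideanSpace.single j 1)

/-- The canonical surface measure on the unit sphere of `ℝ³`
(`volume.toSphere` has total mass `4π`). -/
def sphMeasure : Measure (Metric.sphere (0 : E3) 1) :=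
  (volume : Measure E3).toSphere

instance : IsFiniteMeasure sphMeasure :=
  inferInstanceAs (IsFiniteMeasure (volume : Measure E3).toSphere)

namespace Stmt8Aux

/-- The quadratic form `η ↦ a⁻¹ η · η`. -/
def Q (a : Matrix (Fin 3) (Fin 3) ℝ) (η : Fin 3 → ℝ) : ℝ := ∑ i, a⁻¹.mulVec η i * η i

lemma Q_pos {a : Matrix (Fin 3) (Fin 3) ℝ} (ha : a.PosDef) {η : Fin 3 → ℝ} (hη : η ≠ 0) :
    0 < Q a η := by
  have h := (ha.inv).dotProduct_mulVec_pos hη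
  simpa [Q, dotProduct, mul_comm] using h

lemma Q_cont (a : Matrix (Fin 3) (Fin 3) ℝ) : Continuous fun η : E3 => Q a (fun i => η i) := by
  have hcoord : ∀ i : Fin 3, Continuous fun η : E3 => η i := fun i =>
    (continuous_apply i).comp (PiLp.continuous_ofLp 2 (fun _ : Fin 3 => ℝ))
  simp only [Q, Matrix.mulVec, dotProduct]
  exact continuous_finset_sum _ fun i _ =>
    ((continuous_finset_sum _ fun j _ => continuous_const.mul (hcoord j))).mul (hcoord i)

lemma sum_a_eta_xi {a : Matrix (Fin 3) (Fin 3) ℝ} (ha : a.PosDef) (κ₁ ω : ℝ)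
    {η : Fin 3 → ℝ} (hη : ∑ i, η i * η i = 1) :
    ∑ k, ∑ j, a k j * η k * xiVec a κ₁ ω η j
      = ω * Real.sqrt κ₁ * (Real.sqrt (Q a η))⁻¹ := by
  have hdet : IsUnit a.det := isUnit_iff_ne_zero.mpr ha.det_pos.ne'
  have h1 : a.mulVec (a⁻¹.mulVec η) = η := by
    rw [Matrix.mulVec_mulVec, Matrix.mul_nonsing_inv a hdet, Matrix.one_mulVec]
  have hk : ∀ k, ∑ j, a k j * η k * xiVec a κ₁ ω η j
      = (ω * Real.sqrt κ₁ * (Real.sqrt (Q a η))⁻¹) * (η k * η k) := by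
    intro k
    have h2 : ∑ j, a k j * a⁻¹.mulVec η j = η k := by
      have h3 := congrFun h1 k
      simpa [Matrix.mulVec, dotProduct] using h3
    calc ∑ j, a k j * η k * xiVec a κ₁ ω η j
        = (ω * Real.sqrt κ₁ * (Real.sqrt (Q a η))⁻¹)
            * (η k * ∑ j, a k j * a⁻¹.mulVec η j) := by
          rw [Finset.mul_sum, Finset.mul_sum]
          refine Finset.sum_congr rfl fun j _ => ?_
          simp only [xiVec, Pi.smul_apply, smul_eq_mul, Q]
          ring
      _ = _ := by rw [h2]
  rw [Finset.sum_congr rfl fun k _ => hk k, ← Finset.mul_sum, hη, mul_one]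

lemma pointwise_est {a : Matrix (Fin 3) (Fin 3) ℝ} (ha : a.PosDef) (κ₁ ω : ℝ)
    (R₀ C₀ : ℝ) (hR₀ : 0 < R₀) (v : E3 → ℂ)
    (hv1 : ∀ x : E3, R₀ ≤ ‖x‖ → ‖v x‖ ≤ C₀ / ‖x‖)
    (hv2 : ∀ x : E3, R₀ ≤ ‖x‖ → ∀ k : Fin 3,
      ‖fderiv ℝ v x (EuclideanSpace.single k 1)
          - Complex.I * ((xiVec a κ₁ ω (fun i => ‖x‖⁻¹ * x i) k : ℝ) : ℂ) * v x‖
        ≤ C₀ / ‖x‖ ^ 2)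
    {R : ℝ} (hR : R₀ ≤ R) {η : E3} (hη : ‖η‖ = 1) :
    |((starRingEnd ℂ) (v (R • η)) * T1 a v (R • η)).im
        - ω * Real.sqrt κ₁ * (Real.sqrt (Q a (fun i => η i)))⁻¹ * ‖v (R • η)‖ ^ 2|
      ≤ (∑ k, ∑ j, |a k j|) * C₀ ^ 2 / R ^ 3 := by
  have hRpos : 0 < R := lt_of_lt_of_le hR₀ hR
  set x : E3 := R • η with hx
  have hxnorm : ‖x‖ = R := by
    rw [hx, norm_smul, hη, Real.norm_eq_abs, abs_of_pos hRpos, mul_one]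
  have hxR₀ : R₀ ≤ ‖x‖ := by rw [hxnorm]; exact hR
  have hcoordx : ∀ k, x k = R * η k := fun k => by simp [hx, PiLp.smul_apply]
  have hunit : (fun i => ‖x‖⁻¹ * x i) = (fun i => η i) := by
    funext i
    rw [hxnorm, hcoordx i, ← mul_assoc, inv_mul_cancel₀ hRpos.ne', one_mul]
  have hsum1 : ∑ i, η i * η i = 1 := by
    have h := hη
    rw [EuclideanSpace.norm_eq, Real.sqrt_eq_one] at h
    calc ∑ i, η i * η i = ∑ i, ‖η i‖ ^ 2 := by
          refine Finset.sum_congr rfl fun i _ => ?_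
          rw [Real.norm_eq_abs, sq_abs, sq]
      _ = 1 := h
  have hηle : ∀ k, |η k| ≤ 1 := by
    intro k
    rw [abs_le_one_iff_mul_self_le_one]
    calc η k * η k ≤ ∑ i, η i * η i :=
          Finset.single_le_sum (fun i _ => mul_self_nonneg (η i)) (Finset.mem_univ k)
      _ = 1 := hsum1
  set ξ : Fin 3 → ℝ := xiVec a κ₁ ω (fun i => η i) with hξ
  set e : Fin 3 → ℂ := fun j =>
    fderiv ℝ v x (EuclideanSpace.single j 1) - Complex.I * (ξ j : ℂ) * v x with he
  have hebound : ∀ j, ‖e j‖ ≤ C₀ / R ^ 2 := by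
    intro j
    have h := hv2 x hxR₀ j
    rw [hunit, hxnorm] at h
    exact h
  have hvb : ‖v x‖ ≤ C₀ / R := by
    have h := hv1 x hxR₀
    rwa [hxnorm] at h
  have hD : ∀ j, fderiv ℝ v x (EuclideanSpace.single j 1)
      = Complex.I * (ξ j : ℂ) * v x + e j := by
    intro j; rw [he]; ring
  have hconj : (starRingEnd ℂ) (v x) * v x = ((‖v x‖ ^ 2 : ℝ) : ℂ) := by
    rw [mul_comm, Complex.mul_conj']; push_cast; ring
  have hxcoe : ∀ k, ((x k / ‖x‖ : ℝ) : ℂ) = ((η k : ℝ) : ℂ) := by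
    intro k
    rw [hxnorm, hcoordx k, mul_comm, mul_div_assoc, div_self hRpos.ne', mul_one]
  have hmain : ((starRingEnd ℂ) (v x) * T1 a v x).im
      = (∑ k, ∑ j, a k j * η k * ξ j) * ‖v x‖ ^ 2
        + ∑ k, ∑ j, (a k j * η k) * ((starRingEnd ℂ) (v x) * e j).im := by
    simp only [T1]
    rw [Finset.mul_sum, Complex.im_sum, Finset.sum_mul, ← Finset.sum_add_distrib]
    refine Finset.sum_congr rfl fun k _ => ?_
    rw [Finset.mul_sum, Complex.im_sum, Finset.sum_mul, ← Finset.sum_add_distrib]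
    refine Finset.sum_congr rfl fun j _ => ?_
    rw [hxcoe k, hD j]
    have h5 : (starRingEnd ℂ) (v x) * ((a k j : ℂ) * ((η k : ℝ) : ℂ) *
        (Complex.I * (ξ j : ℂ) * v x + e j))
        = (a k j : ℂ) * ((η k : ℝ) : ℂ) * (ξ j : ℂ)
            * (Complex.I * ((‖v x‖ ^ 2 : ℝ) : ℂ))
          + (a k j : ℂ) * ((η k : ℝ) : ℂ) * ((starRingEnd ℂ) (v x) * e j) := by
      rw [← hconj]; ring
    rw [h5]
    simp only [Complex.add_im, Complex.mul_im, Complex.mul_re, Complex.ofReal_re,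
      Complex.ofReal_im, Complex.I_re, Complex.I_im]
    ring
  rw [hmain, sum_a_eta_xi ha κ₁ ω hsum1]
  have h6 : |ω * Real.sqrt κ₁ * (Real.sqrt (Q a fun i => η i))⁻¹ * ‖v x‖ ^ 2
      + (∑ k, ∑ j, (a k j * η k) * ((starRingEnd ℂ) (v x) * e j).im)
      - ω * Real.sqrt κ₁ * (Real.sqrt (Q a fun i => η i))⁻¹ * ‖v x‖ ^ 2|
      = |∑ k, ∑ j, (a k j * η k) * ((starRingEnd ℂ) (v x) * e j).im| := by
    congr 1; ring
  rw [h6]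
  have hterm : ∀ k j : Fin 3, |(a k j * η k) * ((starRingEnd ℂ) (v x) * e j).im|
      ≤ |a k j| * (C₀ ^ 2 / R ^ 3) := by
    intro k j
    have h1 : |((starRingEnd ℂ) (v x) * e j).im| ≤ C₀ ^ 2 / R ^ 3 := by
      have h2 : |((starRingEnd ℂ) (v x) * e j).im| ≤ ‖(starRingEnd ℂ) (v x) * e j‖ :=
        Complex.abs_im_le_norm _
      have h3 : ‖(starRingEnd ℂ) (v x) * e j‖ = ‖v x‖ * ‖e j‖ := by
        rw [norm_mul]
        simp
      have h4 : ‖v x‖ * ‖e j‖ ≤ (C₀ / R) * (C₀ / R ^ 2) :=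
        mul_le_mul hvb (hebound j) (norm_nonneg _) ((norm_nonneg _).trans hvb)
      have h5 : (C₀ / R) * (C₀ / R ^ 2) = C₀ ^ 2 / R ^ 3 := by
        field_simp
      calc |((starRingEnd ℂ) (v x) * e j).im| ≤ ‖v x‖ * ‖e j‖ := h2.trans_eq h3
        _ ≤ C₀ ^ 2 / R ^ 3 := h5 ▸ h4
    rw [abs_mul, abs_mul]
    have h7 : |η k| * |((starRingEnd ℂ) (v x) * e j).im| ≤ C₀ ^ 2 / R ^ 3 := by
      have := mul_le_mul (hηle k) h1 (abs_nonneg _) zero_le_one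
      simpa using this
    rw [mul_assoc]
    exact mul_le_mul_of_nonneg_left h7 (abs_nonneg _)
  calc |∑ k, ∑ j, (a k j * η k) * ((starRingEnd ℂ) (v x) * e j).im|
      ≤ ∑ k, ∑ j : Fin 3, |(a k j * η k) * ((starRingEnd ℂ) (v x) * e j).im| := by
        refine (Finset.abs_sum_le_sum_abs _ _).trans ?_
        exact Finset.sum_le_sum fun k _ => Finset.abs_sum_le_sum_abs _ _
    _ ≤ ∑ k, ∑ j : Fin 3, |a k j| * (C₀ ^ 2 / R ^ 3) :=
        Finset.sum_le_sum fun k _ => Finset.sum_le_sum fun j _ => hterm k j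
    _ = (∑ k, ∑ j : Fin 3, |a k j|) * (C₀ ^ 2 / R ^ 3) := by
        simp [Finset.sum_mul]
    _ = (∑ k, ∑ j : Fin 3, |a k j|) * C₀ ^ 2 / R ^ 3 := by ring

end Stmt8Aux

/-- Rellich–Vekua type equivalence: for a `C¹` function `v` on
`{|x| ≥ R₀}` satisfying the radiation estimates associated with `A₁`,
`lim_{R→∞} Im ∫_{Σ_R} conj(v) T₁v dσ = 0 ↔ lim_{R→∞} ∫_{Σ_R} |v|² dσ = 0`,
where the integral over `Σ_R` is expressed through the unit-sphere surface
measure as `R² ∫_{Σ_1} f(Rη) dσ(η)`. -/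
theorem stmt8 (a : Matrix (Fin 3) (Fin 3) ℝ) (ha : a.PosDef) (hsym : a.IsSymm)
    (κ₁ ω : ℝ) (hκ : 0 < κ₁) (hω : ω ≠ 0)
    (R₀ C₀ : ℝ) (hR₀ : 0 < R₀) (hC₀ : 0 < C₀) (v : E3 → ℂ)
    (hdiff : ∀ x : E3, R₀ ≤ ‖x‖ → DifferentiableAt ℝ v x)
    (hC1 : ContinuousOn (fun x => fderiv ℝ v x) {x : E3 | R₀ ≤ ‖x‖})
    (hv1 : ∀ x : E3, R₀ ≤ ‖x‖ → ‖v x‖ ≤ C₀ / ‖x‖)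
    (hv2 : ∀ x : E3, R₀ ≤ ‖x‖ → ∀ k : Fin 3,
      ‖fderiv ℝ v x (EuclideanSpace.single k 1)
          - Complex.I * ((xiVec a κ₁ ω (fun i => ‖x‖⁻¹ * x i) k : ℝ) : ℂ) * v x‖
        ≤ C₀ / ‖x‖ ^ 2) :
    Tendsto (fun R : ℝ =>
        R ^ 2 * (∫ η : Metric.sphere (0 : E3) 1,
          (starRingEnd ℂ) (v (R • (η : E3))) * T1 a v (R • (η : E3)) ∂sphMeasure).im)
      atTop (𝓝 0)
    ↔
    Tendsto (fun R : ℝ =>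
        R ^ 2 * ∫ η : Metric.sphere (0 : E3) 1, ‖v (R • (η : E3))‖ ^ 2 ∂sphMeasure)
      atTop (𝓝 0) := by
  classical
  have hsph_ne : (Metric.sphere (0:E3) 1).Nonempty :=
    NormedSpace.sphere_nonempty.mpr zero_le_one
  obtain ⟨ηm, hηm, hQmin⟩ := (isCompact_sphere (0:E3) 1).exists_isMinOn hsph_ne
    (Stmt8Aux.Q_cont a).continuousOn
  obtain ⟨ηM, hηM, hQmax⟩ := (isCompact_sphere (0:E3) 1).exists_isMaxOn hsph_ne
    (Stmt8Aux.Q_cont a).continuousOn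
  have hQpos_s : ∀ η : E3, ‖η‖ = 1 → 0 < Stmt8Aux.Q a (fun i => η i) := by
    intro η hη
    refine Stmt8Aux.Q_pos ha ?_
    intro h0
    have h1 : ‖η‖ = 0 := by
      rw [EuclideanSpace.norm_eq]
      have h2 : ∀ i, η i = 0 := fun i => congrFun h0 i
      simp [h2]
    rw [hη] at h1; norm_num at h1
  have hQmpos : 0 < Stmt8Aux.Q a (fun i => ηm i) :=
    hQpos_s ηm (mem_sphere_zero_iff_norm.mp hηm)
  have hQMpos : 0 < Stmt8Aux.Q a (fun i => ηM i) :=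
    hQpos_s ηM (mem_sphere_zero_iff_norm.mp hηM)
  set c₁ := (Real.sqrt (Stmt8Aux.Q a (fun i => ηM i)))⁻¹ with hc₁d
  set c₂ := (Real.sqrt (Stmt8Aux.Q a (fun i => ηm i)))⁻¹ with hc₂d
  have hc₁pos : 0 < c₁ := inv_pos.mpr (Real.sqrt_pos.mpr hQMpos)
  have hc₂pos : 0 < c₂ := inv_pos.mpr (Real.sqrt_pos.mpr hQmpos)
  set w : E3 → ℝ := fun η => (Real.sqrt (Stmt8Aux.Q a (fun i => η i)))⁻¹ with hwdef
  have hw_nonneg : ∀ η : E3, 0 ≤ w η := fun η => by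
    rw [hwdef]; positivity
  have hw1 : ∀ η : E3, ‖η‖ = 1 → c₁ ≤ w η ∧ w η ≤ c₂ := by
    intro η hη
    have hQη : 0 < Stmt8Aux.Q a (fun i => η i) := hQpos_s η hη
    have hmem : η ∈ Metric.sphere (0:E3) 1 := mem_sphere_zero_iff_norm.mpr hη
    constructor
    · exact inv_anti₀ (Real.sqrt_pos.mpr hQη) (Real.sqrt_le_sqrt (hQmax hmem))
    · exact inv_anti₀ (Real.sqrt_pos.mpr hQmpos) (Real.sqrt_le_sqrt (hQmin hmem))
  set c := ω * Real.sqrt κ₁ with hcdef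
  have hcne : c ≠ 0 := mul_ne_zero hω (Real.sqrt_pos.mpr hκ).ne'
  set G := fun R : ℝ => R ^ 2 * (∫ η : Metric.sphere (0 : E3) 1,
      (starRingEnd ℂ) (v (R • (η : E3))) * T1 a v (R • (η : E3)) ∂sphMeasure).im with hGdef
  set F := fun R : ℝ => R ^ 2 *
      ∫ η : Metric.sphere (0 : E3) 1, ‖v (R • (η : E3))‖ ^ 2 ∂sphMeasure with hFdef
  set H := fun R : ℝ => R ^ 2 *
      ∫ η : Metric.sphere (0 : E3) 1, w (η:E3) * ‖v (R • (η : E3))‖ ^ 2 ∂sphMeasure with hHdef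
  -- integrability for R ≥ R₀
  have hint : ∀ R : ℝ, R₀ ≤ R →
      Integrable (fun η : Metric.sphere (0:E3) 1 =>
        (starRingEnd ℂ) (v (R • (η:E3))) * T1 a v (R • (η:E3))) sphMeasure ∧
      Integrable (fun η : Metric.sphere (0:E3) 1 => ‖v (R • (η:E3))‖ ^ 2) sphMeasure ∧
      Integrable (fun η : Metric.sphere (0:E3) 1 => w (η:E3) * ‖v (R • (η:E3))‖ ^ 2)
        sphMeasure := by
    intro R hR
    have hRpos : 0 < R := lt_of_lt_of_le hR₀ hR
    have hmap : Continuous fun η : Metric.sphere (0:E3) 1 => R • (η:E3) :=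
      continuous_subtype_val.const_smul R
    have himg : ∀ η : Metric.sphere (0:E3) 1, R • (η:E3) ∈ {x : E3 | R₀ ≤ ‖x‖} := by
      intro η
      have hη : ‖(η:E3)‖ = 1 := mem_sphere_zero_iff_norm.mp η.2
      simp only [Set.mem_setOf_eq, norm_smul, hη, Real.norm_eq_abs,
        abs_of_pos hRpos, mul_one]
      exact hR
    have hvS : ContinuousOn v {x : E3 | R₀ ≤ ‖x‖} := fun x hx =>
      ((hdiff x hx).continuousAt).continuousWithinAt
    have hvc : Continuous fun η : Metric.sphere (0:E3) 1 => v (R • (η:E3)) :=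
      hvS.comp_continuous hmap himg
    have hcoord : ∀ i : Fin 3, Continuous fun x : E3 => x i := fun i =>
      (continuous_apply i).comp (PiLp.continuous_ofLp 2 (fun _ : Fin 3 => ℝ))
    have hT1S : ContinuousOn (T1 a v) {x : E3 | R₀ ≤ ‖x‖} := by
      unfold T1
      refine continuousOn_finset_sum _ fun k _ => continuousOn_finset_sum _ fun j _ => ?_
      refine ContinuousOn.mul (ContinuousOn.mul continuousOn_const ?_)
        (hC1.clm_apply continuousOn_const)
      refine Complex.continuous_ofReal.comp_continuousOn ?_
      refine ContinuousOn.div (hcoord k).continuousOn continuous_norm.continuousOn ?_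
      intro x hx
      exact (lt_of_lt_of_le hR₀ hx).ne'
    have hT1c : Continuous fun η : Metric.sphere (0:E3) 1 => T1 a v (R • (η:E3)) :=
      hT1S.comp_continuous hmap himg
    have hwc : Continuous fun η : Metric.sphere (0:E3) 1 => w (η:E3) := by
      have hQs : ContinuousOn (fun x : E3 => (Real.sqrt (Stmt8Aux.Q a fun i => x i))⁻¹)
          (Metric.sphere (0:E3) 1) := by
        refine ContinuousOn.inv₀
          (Real.continuous_sqrt.comp_continuousOn (Stmt8Aux.Q_cont a).continuousOn) ?_
        intro x hx
        exact (Real.sqrt_pos.mpr (hQpos_s x (mem_sphere_zero_iff_norm.mp hx))).ne'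
      exact hQs.comp_continuous continuous_subtype_val (fun η => η.2)
    have hcs : ∀ {F : Type} [NormedAddCommGroup F]
        (f : Metric.sphere (0:E3) 1 → F), Continuous f → Integrable f sphMeasure := by
      intro F _ f hf
      exact hf.integrable_of_hasCompactSupport
        (IsCompact.of_isClosed_subset isCompact_univ (isClosed_tsupport _)
          (Set.subset_univ _))
    exact ⟨hcs _ ((continuous_star.comp hvc).mul hT1c),
      hcs _ ((hvc.norm).pow 2),
      hcs _ (hwc.mul ((hvc.norm).pow 2))⟩
  have hF_nonneg : ∀ R : ℝ, 0 ≤ F R := fun R =>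
    mul_nonneg (sq_nonneg R) (integral_nonneg fun η => sq_nonneg _)
  have hH_nonneg : ∀ R : ℝ, 0 ≤ H R := fun R =>
    mul_nonneg (sq_nonneg R)
      (integral_nonneg fun η => mul_nonneg (hw_nonneg _) (sq_nonneg _))
  -- the key asymptotic identity
  have hKey : Tendsto (fun R => G R - c * H R) atTop (𝓝 0) := by
    set A := ∑ k, ∑ j : Fin 3, |a k j| with hA
    set mass := (sphMeasure Set.univ).toReal with hmass
    have hmass_nn : 0 ≤ mass := ENNReal.toReal_nonneg
    refine squeeze_zero_norm' ?_
      (by simpa using (tendsto_inv_atTop_zero (𝕜 := ℝ)).const_mul (A * C₀ ^ 2 * mass))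
    filter_upwards [eventually_ge_atTop R₀] with R hR
    have hRpos : 0 < R := lt_of_lt_of_le hR₀ hR
    obtain ⟨h1, h2, h3⟩ := hint R hR
    have hdiffR : G R - c * H R = R ^ 2 *
        ∫ η : Metric.sphere (0:E3) 1,
          (((starRingEnd ℂ) (v (R • (η:E3))) * T1 a v (R • (η:E3))).im
            - c * (w (η:E3) * ‖v (R • (η:E3))‖ ^ 2)) ∂sphMeasure := by
      have h1im : Integrable (fun η : Metric.sphere (0:E3) 1 =>
          ((starRingEnd ℂ) (v (R • (η:E3))) * T1 a v (R • (η:E3))).im) sphMeasure := h1.im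
      have him : (∫ η : Metric.sphere (0:E3) 1,
          ((starRingEnd ℂ) (v (R • (η:E3))) * T1 a v (R • (η:E3))).im ∂sphMeasure)
          = (∫ η : Metric.sphere (0:E3) 1,
            (starRingEnd ℂ) (v (R • (η:E3))) * T1 a v (R • (η:E3)) ∂sphMeasure).im :=
        integral_im h1
      rw [integral_sub h1im (h3.const_mul c), him, integral_const_mul]
      rw [hGdef, hHdef]
      ring
    have hb : ∀ η : Metric.sphere (0:E3) 1,
        ‖((starRingEnd ℂ) (v (R • (η:E3))) * T1 a v (R • (η:E3))).im
          - c * (w (η:E3) * ‖v (R • (η:E3))‖ ^ 2)‖ ≤ A * C₀ ^ 2 / R ^ 3 := by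
      intro η
      have hp := Stmt8Aux.pointwise_est ha κ₁ ω R₀ C₀ hR₀ v hv1 hv2 hR
        (mem_sphere_zero_iff_norm.mp η.2)
      have heq : c * (w (η:E3) * ‖v (R • (η:E3))‖ ^ 2)
          = ω * Real.sqrt κ₁ * (Real.sqrt (Stmt8Aux.Q a (fun i => (η:E3) i)))⁻¹
              * ‖v (R • (η:E3))‖ ^ 2 := by
        rw [hcdef, hwdef]; ring
      rw [Real.norm_eq_abs, heq]
      exact hp
    calc ‖G R - c * H R‖
        = R ^ 2 * ‖∫ η : Metric.sphere (0:E3) 1,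
            (((starRingEnd ℂ) (v (R • (η:E3))) * T1 a v (R • (η:E3))).im
              - c * (w (η:E3) * ‖v (R • (η:E3))‖ ^ 2)) ∂sphMeasure‖ := by
          rw [hdiffR, norm_mul, Real.norm_eq_abs (R ^ 2), abs_of_nonneg (sq_nonneg R)]
      _ ≤ R ^ 2 * (A * C₀ ^ 2 / R ^ 3 * mass) := by
          refine mul_le_mul_of_nonneg_left ?_ (sq_nonneg R)
          exact norm_integral_le_of_norm_le_const (Eventually.of_forall hb)
      _ = A * C₀ ^ 2 * mass * R⁻¹ := by
          field_simp
  -- comparison between F and H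
  have hFH : ∀ᶠ R in atTop, c₁ * F R ≤ H R ∧ H R ≤ c₂ * F R := by
    filter_upwards [eventually_ge_atTop R₀] with R hR
    obtain ⟨h1, h2, h3⟩ := hint R hR
    have hle : ∀ η : Metric.sphere (0:E3) 1,
        c₁ * ‖v (R • (η:E3))‖ ^ 2 ≤ w (η:E3) * ‖v (R • (η:E3))‖ ^ 2 := fun η =>
      mul_le_mul_of_nonneg_right
        ((hw1 _ (mem_sphere_zero_iff_norm.mp η.2)).1) (sq_nonneg _)
    have hge : ∀ η : Metric.sphere (0:E3) 1,
        w (η:E3) * ‖v (R • (η:E3))‖ ^ 2 ≤ c₂ * ‖v (R • (η:E3))‖ ^ 2 := fun η =>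
      mul_le_mul_of_nonneg_right
        ((hw1 _ (mem_sphere_zero_iff_norm.mp η.2)).2) (sq_nonneg _)
    constructor
    · have h4 := integral_mono (h2.const_mul c₁) h3 hle
      rw [integral_const_mul] at h4
      calc c₁ * F R = R ^ 2 * (c₁ * ∫ η : Metric.sphere (0:E3) 1,
            ‖v (R • (η:E3))‖ ^ 2 ∂sphMeasure) := by rw [hFdef]; ring
        _ ≤ R ^ 2 * ∫ η : Metric.sphere (0:E3) 1,
            w (η:E3) * ‖v (R • (η:E3))‖ ^ 2 ∂sphMeasure :=
            mul_le_mul_of_nonneg_left h4 (sq_nonneg R)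
        _ = H R := by rw [hHdef]
    · have h4 := integral_mono h3 (h2.const_mul c₂) hge
      rw [integral_const_mul] at h4
      calc H R ≤ R ^ 2 * (c₂ * ∫ η : Metric.sphere (0:E3) 1,
            ‖v (R • (η:E3))‖ ^ 2 ∂sphMeasure) := by
            rw [hHdef]
            exact mul_le_mul_of_nonneg_left h4 (sq_nonneg R)
        _ = c₂ * F R := by rw [hFdef]; ring
  constructor
  · intro hG
    have hcH : Tendsto (fun R => c * H R) atTop (𝓝 0) := by
      have h := hG.sub hKey
      simpa using h
    have hH0 : Tendsto H atTop (𝓝 0) := by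
      have h := hcH.const_mul c⁻¹
      simpa [inv_mul_cancel_left₀ hcne] using h
    refine squeeze_zero' (Eventually.of_forall hF_nonneg) ?_
      (by simpa using hH0.const_mul c₁⁻¹)
    filter_upwards [hFH] with R hRc
    calc F R = c₁⁻¹ * (c₁ * F R) := by field_simp
      _ ≤ c₁⁻¹ * H R :=
        mul_le_mul_of_nonneg_left hRc.1 (le_of_lt (inv_pos.mpr hc₁pos))
  · intro hF
    have hH0 : Tendsto H atTop (𝓝 0) := by
      refine squeeze_zero' (Eventually.of_forall hH_nonneg) ?_
        (by simpa using hF.const_mul c₂)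
      filter_upwards [hFH] with R hRc
      exact hRc.2
    have h := (hH0.const_mul c).add hKey
    have heq : (fun R => c * H R + (G R - c * H R)) = G := by funext R; ring
    rw [heq] at h
    simpa using h
end
end

section
/- Let r > 0, s ∈ ℝ, c ∈ ℂ with Im c > 0, and p, q ∈ ℂ. Then lim_{t→0⁺} (i/(2π)) ∫_{−∞}^{∞} (p + qη) / ( (η + i r)(η − c)(s + i t − η) ) dη = − (p − i q r) / ( (c + i r)(s + i r) ), where for each t > 0 the integral converges absolutely. (This evaluates the Cauchy-type 'plus' projection Π⁺ applied to the rational functions 1/(Δ⁺(ξ)A₂⁻(ξ)) and (iϑ(ξ') + i ã₃₃ ξ₃)/(Δ⁺(ξ)A₂⁻(ξ)) arising in the Šapiro–Lopatinskiĭ condition computation.) -/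
open MeasureTheory Filter Complex
open scoped Topology

noncomputable section

lemma ne_zero_of_im_ne {z : ℂ} (h : z.im ≠ 0) : z ≠ 0 := fun hz => h (by simp [hz])

lemma sub_ne_zero_real (x : ℝ) {a : ℂ} (ha : a.im ≠ 0) : (x : ℂ) - a ≠ 0 :=
  ne_zero_of_im_ne (by simpa using neg_ne_zero.2 ha)

lemma abs_sq_eq (x : ℝ) (a : ℂ) :
    ‖(x : ℂ) - a‖ ^ 2 = (x - a.re) ^ 2 + a.im ^ 2 := by
  rw [Complex.sq_norm, Complex.normSq_apply]
  simp
  ring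

lemma integrable_inv_sq_add (α β : ℝ) (hβ : β ≠ 0) :
    Integrable (fun x : ℝ => ((x - α) ^ 2 + β ^ 2)⁻¹) := by
  have h2 : Integrable (fun x : ℝ => (1 + ((x - α) / β) ^ 2)⁻¹) :=
    (integrable_inv_one_add_sq.comp_div hβ).comp_sub_right α
  refine (h2.const_mul ((β ^ 2)⁻¹)).congr (Filter.Eventually.of_forall fun x => ?_)
  have hb2 : β ^ 2 ≠ 0 := pow_ne_zero _ hβ
  field_simp
  ring

lemma integrable_pair {a b : ℂ} (ha : a.im ≠ 0) (hb : b.im ≠ 0) :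
    Integrable (fun x : ℝ => (((x : ℂ) - a) * ((x : ℂ) - b))⁻¹) := by
  have hcont : Continuous fun x : ℝ => (((x : ℂ) - a) * ((x : ℂ) - b))⁻¹ := by
    refine Continuous.inv₀ (by continuity) fun x =>
      mul_ne_zero (sub_ne_zero_real x ha) (sub_ne_zero_real x hb)
  have hbound : Integrable
      (fun x : ℝ => 2⁻¹ * (((x - a.re) ^ 2 + a.im ^ 2)⁻¹ + ((x - b.re) ^ 2 + b.im ^ 2)⁻¹)) :=
    ((integrable_inv_sq_add a.re a.im ha).add (integrable_inv_sq_add b.re b.im hb)).const_mul _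
  refine hbound.mono' hcont.aestronglyMeasurable (Filter.Eventually.of_forall fun x => ?_)
  have hA : 0 < ‖(x : ℂ) - a‖ := norm_pos_iff.mpr (sub_ne_zero_real x ha)
  have hB : 0 < ‖(x : ℂ) - b‖ := norm_pos_iff.mpr (sub_ne_zero_real x hb)
  have key : (‖(x : ℂ) - a‖)⁻¹ * (‖(x : ℂ) - b‖)⁻¹ ≤
      2⁻¹ * (((‖(x : ℂ) - a‖) ^ 2)⁻¹ + ((‖(x : ℂ) - b‖) ^ 2)⁻¹) := by
    have h2 := two_mul_le_add_sq (‖(x : ℂ) - a‖)⁻¹ (‖(x : ℂ) - b‖)⁻¹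
    rw [← inv_pow, ← inv_pow]
    nlinarith
  calc ‖(((x : ℂ) - a) * ((x : ℂ) - b))⁻¹‖
      = (‖(x : ℂ) - a‖)⁻¹ * (‖(x : ℂ) - b‖)⁻¹ := by
        simp [norm_inv, map_mul, mul_inv, mul_comm]
    _ ≤ 2⁻¹ * (((‖(x : ℂ) - a‖) ^ 2)⁻¹ + ((‖(x : ℂ) - b‖) ^ 2)⁻¹) := key
    _ = 2⁻¹ * (((x - a.re) ^ 2 + a.im ^ 2)⁻¹ + ((x - b.re) ^ 2 + b.im ^ 2)⁻¹) := by
        rw [abs_sq_eq, abs_sq_eq]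

lemma tendsto_inv_atBot_zero' : Tendsto (fun x : ℝ => x⁻¹) atBot (𝓝 0) := by
  have h := (tendsto_inv_atTop_zero (𝕜 := ℝ)).comp tendsto_neg_atBot_atTop
  have h2 := h.neg
  simp only [neg_zero] at h2
  refine h2.congr fun x => ?_
  simp [Function.comp, inv_neg]

lemma tendsto_ratio (ar ai br bi : ℝ) (hbi : bi ≠ 0) {l : Filter ℝ}
    (hl : Tendsto (fun x : ℝ => x⁻¹) l (𝓝 0)) (hne : ∀ᶠ x in l, x ≠ 0) :
    Tendsto (fun x : ℝ => ((x - ar) ^ 2 + ai ^ 2) / ((x - br) ^ 2 + bi ^ 2)) l (𝓝 1) := by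
  set φ : ℝ → ℝ :=
    fun u => ((1 - ar * u) ^ 2 + ai ^ 2 * u ^ 2) / ((1 - br * u) ^ 2 + bi ^ 2 * u ^ 2) with hφ
  have hφ0 : φ 0 = 1 := by simp [hφ]
  have hcont : ContinuousAt φ 0 := by
    apply ContinuousAt.div (by fun_prop) (by fun_prop)
    norm_num
  have h1 : Tendsto (fun x : ℝ => φ x⁻¹) l (𝓝 1) := by
    have := hcont.tendsto.comp hl
    rwa [hφ0] at this
  refine h1.congr' ?_
  filter_upwards [hne] with x hx
  have hx2 : (x⁻¹) ^ 2 ≠ 0 := pow_ne_zero _ (inv_ne_zero hx)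
  have hnum : (1 - ar * x⁻¹) ^ 2 + ai ^ 2 * (x⁻¹) ^ 2 = (x⁻¹) ^ 2 * ((x - ar) ^ 2 + ai ^ 2) := by
    field_simp
  have hden : (1 - br * x⁻¹) ^ 2 + bi ^ 2 * (x⁻¹) ^ 2 = (x⁻¹) ^ 2 * ((x - br) ^ 2 + bi ^ 2) := by
    field_simp
  show φ x⁻¹ = _
  rw [hφ]
  simp only []
  rw [hnum, hden, mul_div_mul_left _ _ hx2]

lemma aux_abs_ne (x : ℝ) {a : ℂ} (ha : a.im ≠ 0) : (x : ℂ) - a ≠ 0 :=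
  fun hz => ha (by simpa using (congrArg Complex.im hz))

lemma abs_sq_eq' (x : ℝ) (c : ℂ) :
    ‖(x : ℂ) - c‖ ^ 2 = (x - c.re) ^ 2 + c.im ^ 2 := by
  rw [Complex.sq_norm, Complex.normSq_apply]
  simp
  ring

lemma tendsto_logabs {a b : ℂ} (ha : a.im ≠ 0) (hb : b.im ≠ 0) {l : Filter ℝ}
    (hl : Tendsto (fun x : ℝ => x⁻¹) l (𝓝 0)) (hne : ∀ᶠ x in l, x ≠ 0) :
    Tendsto (fun x : ℝ =>
      Real.log (‖(x : ℂ) - a‖) - Real.log (‖(x : ℂ) - b‖)) l (𝓝 0) := by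
  have hlog : Tendsto (fun x : ℝ =>
      Real.log (((x - a.re) ^ 2 + a.im ^ 2) / ((x - b.re) ^ 2 + b.im ^ 2))) l (𝓝 0) := by
    have := (Real.continuousAt_log (x := 1) one_ne_zero).tendsto.comp
      (tendsto_ratio a.re a.im b.re b.im hb hl hne)
    simpa [Function.comp_def] using this
  have h2 := hlog.const_mul (2⁻¹ : ℝ)
  simp only [mul_zero] at h2
  refine h2.congr fun x => ?_
  have hA : 0 < ‖(x : ℂ) - a‖ := norm_pos_iff.mpr (aux_abs_ne x ha)
  have hB : 0 < ‖(x : ℂ) - b‖ := norm_pos_iff.mpr (aux_abs_ne x hb)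
  have hN : (x - a.re) ^ 2 + a.im ^ 2 ≠ 0 := by rw [← abs_sq_eq']; positivity
  have hD : (x - b.re) ^ 2 + b.im ^ 2 ≠ 0 := by rw [← abs_sq_eq']; positivity
  rw [Real.log_div hN hD, ← abs_sq_eq', ← abs_sq_eq', Real.log_pow, Real.log_pow]
  push_cast
  ring

lemma tendsto_abs_top (a : ℂ) :
    Tendsto (fun x : ℝ => ‖(x : ℂ) - a‖) atTop atTop := by
  have h0 : Tendsto (fun x : ℝ => x - a.re) atTop atTop := by
    have := tendsto_atTop_add_const_right atTop (-a.re) (tendsto_id (α := ℝ))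
    refine this.congr fun x => ?_
    simp only [id_eq]
    ring
  have h1 : Tendsto (fun x : ℝ => |x - a.re|) atTop atTop := tendsto_abs_atTop_atTop.comp h0
  refine tendsto_atTop_mono (fun x => ?_) h1
  have := Complex.abs_re_le_norm ((x : ℂ) - a)
  simpa using this

lemma tendsto_abs_bot (a : ℂ) :
    Tendsto (fun x : ℝ => ‖(x : ℂ) - a‖) atBot atTop := by
  have h0 : Tendsto (fun x : ℝ => x - a.re) atBot atBot := by
    have := tendsto_atBot_add_const_right atBot (-a.re) (tendsto_id (α := ℝ))
    refine this.congr fun x => ?_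
    simp only [id_eq]
    ring
  have h1 : Tendsto (fun x : ℝ => |x - a.re|) atBot atTop := tendsto_abs_atBot_atTop.comp h0
  refine tendsto_atTop_mono (fun x => ?_) h1
  have := Complex.abs_re_le_norm ((x : ℂ) - a)
  simpa using this

lemma tendsto_arg_top {a : ℂ} (ha : a.im ≠ 0) :
    Tendsto (fun x : ℝ => Complex.arg ((x : ℂ) - a)) atTop (𝓝 0) := by
  have h1 : Tendsto (fun x : ℝ => -a.im / ‖(x : ℂ) - a‖) atTop (𝓝 0) :=
    Tendsto.div_atTop tendsto_const_nhds (tendsto_abs_top a)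
  have h2 := (Real.continuous_arcsin.continuousAt (x := 0)).tendsto.comp h1
  rw [Real.arcsin_zero] at h2
  refine Filter.Tendsto.congr' ?_ h2
  filter_upwards [eventually_ge_atTop a.re] with x hx
  rw [Function.comp_apply, Complex.arg_of_re_nonneg (by simpa using sub_nonneg.2 hx)]
  simp

lemma tendsto_arg_bot_pos {a : ℂ} (ha : 0 < a.im) :
    Tendsto (fun x : ℝ => Complex.arg ((x : ℂ) - a)) atBot (𝓝 (-Real.pi)) := by
  have h1 : Tendsto (fun x : ℝ => a.im / ‖(x : ℂ) - a‖) atBot (𝓝 0) :=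
    Tendsto.div_atTop tendsto_const_nhds (tendsto_abs_bot a)
  have h2 := (Real.continuous_arcsin.continuousAt (x := 0)).tendsto.comp h1
  rw [Real.arcsin_zero] at h2
  have h3 := h2.sub_const Real.pi
  rw [zero_sub] at h3
  refine Filter.Tendsto.congr' ?_ h3
  filter_upwards [eventually_lt_atBot a.re] with x hx
  rw [Function.comp_apply, Complex.arg_of_re_neg_of_im_neg (by simpa using sub_neg.2 hx)
    (by simpa using neg_neg_iff_pos.2 ha)]
  simp [sub_eq_add_neg]

lemma tendsto_arg_bot_neg {b : ℂ} (hb : b.im < 0) :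
    Tendsto (fun x : ℝ => Complex.arg ((x : ℂ) - b)) atBot (𝓝 Real.pi) := by
  have h1 : Tendsto (fun x : ℝ => b.im / ‖(x : ℂ) - b‖) atBot (𝓝 0) :=
    Tendsto.div_atTop tendsto_const_nhds (tendsto_abs_bot b)
  have h2 := (Real.continuous_arcsin.continuousAt (x := 0)).tendsto.comp h1
  rw [Real.arcsin_zero] at h2
  have h3 := h2.add_const Real.pi
  rw [zero_add] at h3
  refine Filter.Tendsto.congr' ?_ h3
  filter_upwards [eventually_lt_atBot b.re] with x hx
  rw [Function.comp_apply, Complex.arg_of_re_neg_of_im_nonneg (by simpa using sub_neg.2 hx)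
    (by simpa using neg_nonneg.2 hb.le)]
  simp

lemma log_sub_log (z w : ℂ) :
    Complex.log z - Complex.log w =
      ((Real.log (‖z‖) - Real.log (‖w‖) : ℝ) : ℂ) +
        ((Complex.arg z - Complex.arg w : ℝ) : ℂ) * Complex.I := by
  rw [Complex.log, Complex.log]
  push_cast
  ring

lemma tendsto_inner_top {a b : ℂ} (ha : a.im ≠ 0) (hb : b.im ≠ 0) :
    Tendsto (fun x : ℝ => Complex.log ((x : ℂ) - a) - Complex.log ((x : ℂ) - b)) atTop (𝓝 0) := by
  have hR := tendsto_logabs ha hb tendsto_inv_atTop_zero (eventually_ne_atTop 0)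
  have hA := (tendsto_arg_top ha).sub (tendsto_arg_top hb)
  have h := hR.ofReal.add ((hA.ofReal).mul_const Complex.I)
  have h2 : Tendsto (fun x : ℝ =>
      ((Real.log (‖(x : ℂ) - a‖) - Real.log (‖(x : ℂ) - b‖) : ℝ) : ℂ) +
        ((Complex.arg ((x : ℂ) - a) - Complex.arg ((x : ℂ) - b) : ℝ) : ℂ) * Complex.I)
      atTop (𝓝 0) := by
    convert h using 2
    simp
  refine h2.congr fun x => (log_sub_log _ _).symm

lemma tendsto_inner_bot {a b : ℂ} (ha : 0 < a.im) (hb : b.im < 0) :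
    Tendsto (fun x : ℝ => Complex.log ((x : ℂ) - a) - Complex.log ((x : ℂ) - b)) atBot
      (𝓝 (((-(2 * Real.pi) : ℝ) : ℂ) * Complex.I)) := by
  have hR := tendsto_logabs ha.ne' hb.ne tendsto_inv_atBot_zero' (eventually_ne_atBot 0)
  have hA := (tendsto_arg_bot_pos ha).sub (tendsto_arg_bot_neg hb)
  have h := hR.ofReal.add ((hA.ofReal).mul_const Complex.I)
  have h2 : Tendsto (fun x : ℝ =>
      ((Real.log (‖(x : ℂ) - a‖) - Real.log (‖(x : ℂ) - b‖) : ℝ) : ℂ) +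
        ((Complex.arg ((x : ℂ) - a) - Complex.arg ((x : ℂ) - b) : ℝ) : ℂ) * Complex.I)
      atBot (𝓝 (((-(2 * Real.pi) : ℝ) : ℂ) * Complex.I)) := by
    convert h using 2
    push_cast
    ring
  refine h2.congr fun x => (log_sub_log _ _).symm

lemma integral_pair_cauchy {a b : ℂ} (ha : 0 < a.im) (hb : b.im < 0) :
    ∫ x : ℝ, (((x : ℂ) - a) * ((x : ℂ) - b))⁻¹ = 2 * Real.pi * Complex.I / (a - b) := by
  have hab : a - b ≠ 0 := by
    intro h
    have := congrArg Complex.im h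
    simp at this
    linarith
  set F : ℝ → ℂ :=
    fun x => (a - b)⁻¹ * (Complex.log ((x : ℂ) - a) - Complex.log ((x : ℂ) - b)) with hF
  have hderiv : ∀ x : ℝ, HasDerivAt F ((((x : ℂ) - a) * ((x : ℂ) - b))⁻¹) x := by
    intro x
    have hxa : (x : ℂ) - a ≠ 0 := aux_abs_ne x ha.ne'
    have hxb : (x : ℂ) - b ≠ 0 := aux_abs_ne x hb.ne
    have h1 : HasDerivAt (fun z : ℂ => Complex.log (z - a)) (((x : ℂ) - a)⁻¹) (x : ℂ) := by
      have hd := (Complex.hasDerivAt_log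
        (show ((x : ℂ) - a) ∈ Complex.slitPlane from
          Complex.mem_slitPlane_iff.2 (Or.inr (by simpa using neg_ne_zero.2 ha.ne')))).comp
        (x : ℂ) ((hasDerivAt_id ((x : ℂ))).sub_const a)
      simpa [Function.comp_def] using hd
    have h2 : HasDerivAt (fun z : ℂ => Complex.log (z - b)) (((x : ℂ) - b)⁻¹) (x : ℂ) := by
      have hd := (Complex.hasDerivAt_log
        (show ((x : ℂ) - b) ∈ Complex.slitPlane from
          Complex.mem_slitPlane_iff.2 (Or.inr (by simpa using neg_ne_zero.2 hb.ne)))).comp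
        (x : ℂ) ((hasDerivAt_id ((x : ℂ))).sub_const b)
      simpa [Function.comp_def] using hd
    have h3 := ((h1.sub h2).comp_ofReal).const_mul ((a - b)⁻¹)
    have heq : (a - b)⁻¹ * (((x : ℂ) - a)⁻¹ - ((x : ℂ) - b)⁻¹)
        = (((x : ℂ) - a) * ((x : ℂ) - b))⁻¹ := by
      field_simp
      ring
    rw [heq] at h3
    exact h3
  have hint := integrable_pair ha.ne' hb.ne
  have htop : Tendsto F atTop (𝓝 0) := by
    have := (tendsto_inner_top ha.ne' hb.ne).const_mul ((a - b)⁻¹)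
    simpa using this
  have hbot : Tendsto F atBot (𝓝 ((a - b)⁻¹ * (((-(2 * Real.pi) : ℝ) : ℂ) * Complex.I))) :=
    (tendsto_inner_bot ha hb).const_mul _
  have h1 := integral_Iic_of_hasDerivAt_of_tendsto' (a := (0 : ℝ))
    (fun x _ => hderiv x) hint.integrableOn hbot
  have h2 := integral_Ioi_of_hasDerivAt_of_tendsto' (a := (0 : ℝ))
    (fun x _ => hderiv x) hint.integrableOn htop
  have h3 := intervalIntegral.integral_Iic_add_Ioi (b := (0 : ℝ)) hint.integrableOn hint.integrableOn
  rw [← h3, h1, h2]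
  push_cast
  field_simp
  ring

lemma final_alg (pi' p q r' c w : ℂ) (hpi : pi' ≠ 0)
    (h1 : c + Complex.I * r' ≠ 0) (h2 : w + Complex.I * r' ≠ 0)
    (h3 : c - w ≠ 0) (h4 : w - c ≠ 0) :
    -(p - Complex.I * q * r') / ((c + Complex.I * r') * (w + Complex.I * r'))
      = Complex.I / (2 * pi') *
        (-(p + q * c) / (c - w) * (2 * pi' * Complex.I / (c - -(Complex.I * r')))
          + -(p + q * w) / (w - c) * (2 * pi' * Complex.I / (w - -(Complex.I * r')))) := by
  rw [show c - -(Complex.I * r') = c + Complex.I * r' from by ring,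
    show w - -(Complex.I * r') = w + Complex.I * r' from by ring]
  have h2pi : (2 : ℂ) * pi' ≠ 0 := mul_ne_zero two_ne_zero hpi
  have hstep : Complex.I / (2 * pi') *
      (-(p + q * c) / (c - w) * (2 * pi' * Complex.I / (c + Complex.I * r'))
        + -(p + q * w) / (w - c) * (2 * pi' * Complex.I / (w + Complex.I * r')))
      = Complex.I * Complex.I * ((2 * pi') * (2 * pi')⁻¹) *
        (-(p + q * c) / (c - w) * (c + Complex.I * r')⁻¹
          + -(p + q * w) / (w - c) * (w + Complex.I * r')⁻¹) := by ring
  rw [hstep, Complex.I_mul_I, mul_inv_cancel₀ h2pi]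
  field_simp
  ring

/-- the Cauchy-type 'plus' projection evaluation:
for `r > 0`, `s ∈ ℝ`, `c ∈ ℂ` with `Im c > 0` and `p, q ∈ ℂ`,
`lim_{t→0⁺} (i/2π) ∫_ℝ (p + qη)/((η + ir)(η − c)(s + it − η)) dη
  = −(p − iqr)/((c + ir)(s + ir))`,
the integral converging absolutely for each `t > 0`. -/
theorem stmt15 (r s : ℝ) (hr : 0 < r) (c : ℂ) (hc : 0 < c.im) (p q : ℂ) :
    (∀ t : ℝ, 0 < t →
      Integrable (fun η : ℝ =>
        (p + q * (η : ℂ)) /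
          (((η : ℂ) + Complex.I * (r : ℂ)) * ((η : ℂ) - c)
            * ((s : ℂ) + Complex.I * (t : ℂ) - (η : ℂ)))) volume) ∧
    Tendsto (fun t : ℝ =>
        Complex.I / (2 * (Real.pi : ℂ)) *
          ∫ η : ℝ, (p + q * (η : ℂ)) /
            (((η : ℂ) + Complex.I * (r : ℂ)) * ((η : ℂ) - c)
              * ((s : ℂ) + Complex.I * (t : ℂ) - (η : ℂ))))
      (𝓝[>] (0 : ℝ))
      (𝓝 (-(p - Complex.I * q * (r : ℂ)) /
        ((c + Complex.I * (r : ℂ)) * ((s : ℂ) + Complex.I * (r : ℂ))))) := by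
  have hrne : r ≠ 0 := hr.ne'
  have hcim : c.im ≠ 0 := hc.ne'
  constructor
  · -- Integrability
    intro t ht
    have hwim : ((s : ℂ) + Complex.I * (t : ℂ)).im = t := by simp
    have hpair : Integrable
        (fun η : ℝ => (((η : ℂ) - c) * ((η : ℂ) - ((s : ℂ) + Complex.I * (t : ℂ))))⁻¹) :=
      integrable_pair hcim (by rw [hwim]; exact ht.ne')
    have hirne : ∀ η : ℝ, (η : ℂ) + Complex.I * (r : ℂ) ≠ 0 := fun η =>
      ne_zero_of_im_ne (by simp [hrne])
    have hmeas : AEStronglyMeasurable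
        (fun η : ℝ => -((p + q * (η : ℂ)) / ((η : ℂ) + Complex.I * (r : ℂ)))) volume := by
      refine Continuous.aestronglyMeasurable ?_
      exact (Continuous.div (by continuity) (by continuity) hirne).neg
    have hbdd : ∃ C, ∀ η : ℝ,
        ‖-((p + q * (η : ℂ)) / ((η : ℂ) + Complex.I * (r : ℂ)))‖ ≤ C := by
      refine ⟨‖p‖ / r + ‖q‖, fun η => ?_⟩
      rw [norm_neg, norm_div]
      set A := ‖(η : ℂ) + Complex.I * (r : ℂ)‖ with hA
      have habs_im : r ≤ A := by
        have h := Complex.abs_im_le_norm ((η : ℂ) + Complex.I * (r : ℂ))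
        rw [← hA] at h
        simpa [abs_of_pos hr] using h
      have habs_re : |η| ≤ A := by
        have h := Complex.abs_re_le_norm ((η : ℂ) + Complex.I * (r : ℂ))
        rw [← hA] at h
        simpa using h
      have hApos : 0 < A := lt_of_lt_of_le hr habs_im
      rw [div_le_iff₀ hApos]
      have hnorm : ‖p + q * (η : ℂ)‖ ≤ ‖p‖ + ‖q‖ * |η| := by
        calc ‖p + q * (η : ℂ)‖ ≤ ‖p‖ + ‖q * (η : ℂ)‖ := norm_add_le _ _
          _ = ‖p‖ + ‖q‖ * |η| := by rw [norm_mul, Complex.norm_real, Real.norm_eq_abs]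
      have e1 : ‖p‖ / r * r ≤ ‖p‖ / r * A :=
        mul_le_mul_of_nonneg_left habs_im (by positivity)
      have e1' : ‖p‖ / r * r = ‖p‖ := div_mul_cancel₀ _ hrne
      have e2 : ‖q‖ * |η| ≤ ‖q‖ * A := mul_le_mul_of_nonneg_left habs_re (norm_nonneg q)
      have expand : (‖p‖ / r + ‖q‖) * A = ‖p‖ / r * A + ‖q‖ * A := by ring
      linarith
    have := hpair.bdd_mul hmeas (Filter.Eventually.of_forall hbdd.choose_spec)
    refine this.congr (Filter.Eventually.of_forall fun η => ?_)
    have h1 : (η : ℂ) + Complex.I * (r : ℂ) ≠ 0 := hirne η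
    have h2 : (η : ℂ) - c ≠ 0 := ne_zero_of_im_ne (by simp [hcim])
    have h3 : (η : ℂ) - ((s : ℂ) + Complex.I * (t : ℂ)) ≠ 0 :=
      ne_zero_of_im_ne (by simp [ht.ne'])
    have h4 : (s : ℂ) + Complex.I * (t : ℂ) - (η : ℂ) ≠ 0 :=
      ne_zero_of_im_ne (by simp [ht.ne'])
    field_simp
    ring
  · -- Limit
    have htarget_ne : (c + Complex.I * (r : ℂ)) * ((s : ℂ) + Complex.I * (r : ℂ)) ≠ 0 := by
      refine mul_ne_zero (ne_zero_of_im_ne ?_) (ne_zero_of_im_ne ?_)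
      · simp; linarith
      · simp [hrne]
    have hcontT : Tendsto (fun t : ℝ =>
        -(p - Complex.I * q * (r : ℂ)) /
          ((c + Complex.I * (r : ℂ)) * ((s : ℂ) + Complex.I * (t : ℂ) + Complex.I * (r : ℂ))))
        (𝓝 (0 : ℝ))
        (𝓝 (-(p - Complex.I * q * (r : ℂ)) /
          ((c + Complex.I * (r : ℂ)) * ((s : ℂ) + Complex.I * (r : ℂ))))) := by
      have hca : ContinuousAt (fun t : ℝ =>
          -(p - Complex.I * q * (r : ℂ)) /
            ((c + Complex.I * (r : ℂ)) * ((s : ℂ) + Complex.I * (t : ℂ) + Complex.I * (r : ℂ))))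
          (0 : ℝ) := by
        refine ContinuousAt.div continuousAt_const (by fun_prop) ?_
        simpa using htarget_ne
      have := hca.tendsto
      simpa using this
    refine Tendsto.congr' ?_ (hcontT.mono_left nhdsWithin_le_nhds)
    have hmem : Set.Ioo (0 : ℝ) c.im ∈ 𝓝[>] (0 : ℝ) :=
      Ioo_mem_nhdsGT_of_mem ⟨le_refl (0:ℝ), hc⟩
    filter_upwards [hmem] with t ht
    obtain ⟨ht0, htc⟩ := ht
    -- evaluate the integral for 0 < t < c.im
    have hwim : ((s : ℂ) + Complex.I * (t : ℂ)).im = t := by simp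
    have ha1im : (-(Complex.I * (r : ℂ))).im = -r := by simp
    have hcw : c - ((s : ℂ) + Complex.I * (t : ℂ)) ≠ 0 :=
      ne_zero_of_im_ne (by rw [Complex.sub_im, hwim]; intro h; linarith)
    have hwc : ((s : ℂ) + Complex.I * (t : ℂ)) - c ≠ 0 :=
      ne_zero_of_im_ne (by rw [Complex.sub_im, hwim]; intro h; linarith)
    have hca1 : c - -(Complex.I * (r : ℂ)) ≠ 0 :=
      ne_zero_of_im_ne (by rw [Complex.sub_im, ha1im]; intro h; linarith)
    have hwa1 : ((s : ℂ) + Complex.I * (t : ℂ)) - -(Complex.I * (r : ℂ)) ≠ 0 :=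
      ne_zero_of_im_ne (by rw [Complex.sub_im, hwim, ha1im]; intro h; linarith)
    have hcir : c + Complex.I * (r : ℂ) ≠ 0 :=
      ne_zero_of_im_ne (by simp; intro h; linarith)
    have hwir : ((s : ℂ) + Complex.I * (t : ℂ)) + Complex.I * (r : ℂ) ≠ 0 := by
      refine ne_zero_of_im_ne ?_
      rw [Complex.add_im, hwim]
      simp
      intro h; linarith
    have hπ : (Real.pi : ℂ) ≠ 0 := Complex.ofReal_ne_zero.2 Real.pi_ne_zero
    have hkey : (fun η : ℝ => (p + q * (η : ℂ)) /
          (((η : ℂ) + Complex.I * (r : ℂ)) * ((η : ℂ) - c)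
            * ((s : ℂ) + Complex.I * (t : ℂ) - (η : ℂ))))
        = (fun η : ℝ => (-(p + q * c) / (c - ((s : ℂ) + Complex.I * (t : ℂ))))
              * (((η : ℂ) - c) * ((η : ℂ) - -(Complex.I * (r : ℂ))))⁻¹
            + (-(p + q * ((s : ℂ) + Complex.I * (t : ℂ))) / (((s : ℂ) + Complex.I * (t : ℂ)) - c))
              * (((η : ℂ) - ((s : ℂ) + Complex.I * (t : ℂ))) * ((η : ℂ) - -(Complex.I * (r : ℂ))))⁻¹) := by
      funext η
      have h1 : (η : ℂ) - -(Complex.I * (r : ℂ)) ≠ 0 :=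
        ne_zero_of_im_ne (by rw [Complex.sub_im, ha1im]; simp [hrne])
      have h1' : (η : ℂ) + Complex.I * (r : ℂ) ≠ 0 := by
        have heq : (η : ℂ) + Complex.I * (r : ℂ) = (η : ℂ) - -(Complex.I * (r : ℂ)) := by ring
        rw [heq]; exact h1
      have h2 : (η : ℂ) - c ≠ 0 := ne_zero_of_im_ne (by simp [hcim])
      have h3 : (η : ℂ) - ((s : ℂ) + Complex.I * (t : ℂ)) ≠ 0 :=
        ne_zero_of_im_ne (by rw [Complex.sub_im, hwim]; simp [ht0.ne'])
      have h4 : (s : ℂ) + Complex.I * (t : ℂ) - (η : ℂ) ≠ 0 := by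
        have heq : (s : ℂ) + Complex.I * (t : ℂ) - (η : ℂ)
            = -((η : ℂ) - ((s : ℂ) + Complex.I * (t : ℂ))) := by ring
        rw [heq]; exact neg_ne_zero.2 h3
      field_simp
      ring
    rw [hkey]
    have hint1 : Integrable (fun η : ℝ => (((η : ℂ) - c) * ((η : ℂ) - -(Complex.I * (r : ℂ))))⁻¹) :=
      integrable_pair hcim (by rw [ha1im]; simpa using hrne)
    have hint2 : Integrable (fun η : ℝ =>
        (((η : ℂ) - ((s : ℂ) + Complex.I * (t : ℂ))) * ((η : ℂ) - -(Complex.I * (r : ℂ))))⁻¹) :=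
      integrable_pair (by rw [hwim]; exact ht0.ne') (by rw [ha1im]; simpa using hrne)
    rw [integral_add (hint1.const_mul _) (hint2.const_mul _),
      integral_const_mul, integral_const_mul,
      integral_pair_cauchy hc (show (-(Complex.I * (r : ℂ))).im < 0 by rw [ha1im]; linarith),
      integral_pair_cauchy (show 0 < ((s : ℂ) + Complex.I * (t : ℂ)).im by rw [hwim]; exact ht0)
        (show (-(Complex.I * (r : ℂ))).im < 0 by rw [ha1im]; linarith)]
    exact final_alg (Real.pi : ℂ) p q (r : ℂ) c ((s : ℂ) + Complex.I * (t : ℂ))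
      hπ hcir hwir hcw hwc
end
end

section
/- Let β̃ > 0, a₃₃ > 0, r > 0, α₂ > 0, s > 0 and α₁ ∈ ℝ. Define the complex number S := − i β̃ / ( a₃₃ (α₁ + i(α₂ + r)) ) − 2 s · i β̃ α₂ / (α₁ + i(α₂ + r)). Then Re S = − β̃ (α₂ + r) (1 + 2 α₂ a₃₃ s) / ( a₃₃ ( α₁² + (α₂ + r)² ) ) < 0. -/
noncomputable section

/-- verification of the Šapiro–Lopatinskiĭ type condition: for
`β̃ > 0`, `a₃₃ > 0`, `r > 0`, `α₂ > 0`, `s > 0`, `α₁ ∈ ℝ`, the boundary symbol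
`S = −iβ̃/(a₃₃(α₁ + i(α₂+r))) − 2s·iβ̃α₂/(α₁ + i(α₂+r))` satisfies
`Re S = −β̃(α₂+r)(1 + 2α₂a₃₃s)/(a₃₃(α₁² + (α₂+r)²)) < 0`. -/
theorem stmt17 (βt a33 r α₂ s α₁ : ℝ)
    (hβ : 0 < βt) (ha : 0 < a33) (hr : 0 < r) (hα₂ : 0 < α₂) (hs : 0 < s)
    (S : ℂ)
    (hS : S = -Complex.I * (βt : ℂ) / ((a33 : ℂ) * ((α₁ : ℂ) + ((α₂ + r : ℝ) : ℂ) * Complex.I))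
        - 2 * (s : ℂ) * (Complex.I * (βt : ℂ) * (α₂ : ℂ)
            / ((α₁ : ℂ) + ((α₂ + r : ℝ) : ℂ) * Complex.I))) :
    S.re = -(βt * (α₂ + r) * (1 + 2 * α₂ * a33 * s)) / (a33 * (α₁ ^ 2 + (α₂ + r) ^ 2))
      ∧ S.re < 0 := by
  have hD : (0:ℝ) < a33 * (α₁ ^ 2 + (α₂ + r) ^ 2) := by positivity
  have hdc : ((α₁ : ℂ) + ((α₂ + r : ℝ) : ℂ) * Complex.I) ≠ 0 := by
    intro h
    have := congrArg Complex.im h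
    simp at this
    nlinarith
  have hac : (a33 : ℂ) ≠ 0 := by exact_mod_cast ha.ne'
  have hDc : ((a33 * (α₁ ^ 2 + (α₂ + r) ^ 2) : ℝ) : ℂ) ≠ 0 := by exact_mod_cast hD.ne'
  have hz : S = (((-(βt * (α₂ + r) * (1 + 2 * α₂ * a33 * s)) : ℝ) : ℂ)
      + ((-(βt * α₁ * (1 + 2 * α₂ * a33 * s)) : ℝ) : ℂ) * Complex.I)
      / (((a33 * (α₁ ^ 2 + (α₂ + r) ^ 2) : ℝ)) : ℂ) := by
    rw [hS, mul_div_assoc', div_sub_div _ _ (mul_ne_zero hac hdc) hdc,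
      div_eq_div_iff (mul_ne_zero (mul_ne_zero hac hdc) hdc) hDc]
    push_cast
    ring_nf
    simp only [show (Complex.I:ℂ)^3 = -Complex.I by rw [pow_succ, Complex.I_sq]; ring, Complex.I_sq]
    ring
  have key : S.re = -(βt * (α₂ + r) * (1 + 2 * α₂ * a33 * s)) / (a33 * (α₁ ^ 2 + (α₂ + r) ^ 2)) := by
    rw [hz, Complex.div_ofReal_re]
    simp
  refine ⟨key, ?_⟩
  rw [key]
  apply div_neg_of_neg_of_pos
  · have : 0 < βt * (α₂ + r) * (1 + 2 * α₂ * a33 * s) := by positivity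
    linarith
  · positivity
end
end
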